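/- arXiv:2102.06635 — 5 statements merged into one kernel-verified Lean document; each statement's English description precedes it below -/
import Mathlib

section
/- Let n ≥ 3 and let x : (edges of complete graph Kₙ) → ℝ be edge weights. Define yₙ = min over i ∈ [n-1] of x(i,n), and for 1 ≤ i < j ≤ n-1 define x'(i,j) = min(x(i,j), x(i,n) + x(j,n) - yₙ). Then the minimum spanning tree value of Kₙ with weights x equals yₙ plus the minimum spanning tree value of Kₙ₋₁ with weights x'. -/
/-- `T` is (the edge set of) a spanning tree of the complete graph on `Fin n`:
the graph formed by its edges is a tree whose connectivity spans all vertices,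
and it contains no self-loops. -/
def IsSpanningTree {n : ℕ} (T : Finset (Sym2 (Fin n))) : Prop :=
  (SimpleGraph.fromEdgeSet (T : Set (Sym2 (Fin n)))).IsTree ∧ ∀ e ∈ T, ¬ e.IsDiag

/-- The total weight of an edge set `T`, where the weight of the edge
between `i < j` is `x i j`. -/
noncomputable def treeWeight {n : ℕ} (x : Fin n → Fin n → ℝ) (T : Finset (Sym2 (Fin n))) : ℝ :=
  ∑ p ∈ Finset.univ.filter (fun p : Fin n × Fin n => p.1 < p.2 ∧ s(p.1, p.2) ∈ T), x p.1 p.2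

/-- The value of a minimum spanning tree of the complete graph on `Fin n`
with edge weights `x`. -/
noncomputable def mstValue (n : ℕ) (x : Fin n → Fin n → ℝ) : ℝ :=
  sInf {w : ℝ | ∃ T : Finset (Sym2 (Fin n)), IsSpanningTree T ∧ w = treeWeight x T}


open SimpleGraph Finset

set_option linter.unusedSectionVars false
set_option maxHeartbeats 1000000

variable {V : Type*} [Fintype V] [DecidableEq V]

/-- Transfer reachability along a vertex map that sends edges to reachable pairs. -/
lemma reachable_map_aux {W : Type*} {G : SimpleGraph V} {H : SimpleGraph W} (f : V → W)
    (h : ∀ a b, G.Adj a b → H.Reachable (f a) (f b)) {u v : V}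
    (huv : G.Reachable u v) : H.Reachable (f u) (f v) := by
  obtain ⟨w⟩ := huv
  induction w with
  | nil => exact Reachable.refl _
  | cons ha _ ih => exact (h _ _ ha).trans ih

lemma connected_card_le (G : SimpleGraph V) (hG : G.Connected) :
    Fintype.card V ≤ G.edgeSet.ncard + 1 ∧
      (G.edgeSet.ncard + 1 = Fintype.card V → G.IsAcyclic) := by
  classical
  obtain ⟨k, hk⟩ : ∃ k, G.edgeSet.ncard = k := ⟨_, rfl⟩
  induction k using Nat.strong_induction_on generalizing G with
  | _ k ih =>
  by_cases hac : G.IsAcyclic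
  · have ht : G.IsTree := ⟨hG, hac⟩
    have hcf := ht.card_edgeFinset
    have hcard : G.edgeSet.ncard = G.edgeFinset.card := by
      rw [← coe_edgeFinset, Set.ncard_coe_finset]
    constructor
    · omega
    · intro _; exact hac
  · rw [isAcyclic_iff_forall_adj_isBridge] at hac
    push_neg at hac
    obtain ⟨a, b, hab, hnb⟩ := hac
    rw [isBridge_iff] at hnb
    push_neg at hnb
    have hreach : (G \ fromEdgeSet {s(a, b)}).Reachable a b := hnb
    set G' := G \ fromEdgeSet {s(a, b)} with hG'
    have hle : G' ≤ G := sdiff_le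
    have hGconn' : G'.Connected := by
      rw [connected_iff]
      refine ⟨fun u v => ?_, hG.nonempty⟩
      refine reachable_map_aux (id : V → V) (fun c d hcd => ?_) (hG.preconnected u v)
      by_cases hcase : s(c, d) = s(a, b)
      · rw [Sym2.eq_iff] at hcase
        rcases hcase with ⟨rfl, rfl⟩ | ⟨rfl, rfl⟩
        · exact hreach
        · exact hreach.symm
      · exact Adj.reachable (by
          simp only [hG', sdiff_adj, fromEdgeSet_adj]
          exact ⟨hcd, by simp [hcase]⟩)
    have hedge : G'.edgeSet = G.edgeSet \ {s(a, b)} := by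
      simp only [hG', edgeSet_sdiff, edgeSet_fromEdgeSet]
      ext e
      simp only [Set.mem_diff, Set.mem_singleton_iff, Set.mem_setOf_eq]
      constructor
      · rintro ⟨he, hne⟩
        refine ⟨he, fun hc => hne ⟨hc, ?_⟩⟩
        subst hc; exact hab.ne
      · rintro ⟨he, hne⟩
        exact ⟨he, fun hc => hne hc.1⟩
    have hmem : s(a, b) ∈ G.edgeSet := hab
    have hfin : G.edgeSet.Finite := Set.toFinite _
    have hncard : G'.edgeSet.ncard = k - 1 := by
      rw [hedge, Set.ncard_diff_singleton_of_mem hmem, hk]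
    have hkpos : 1 ≤ k := by
      have : G.edgeSet.ncard ≠ 0 := by
        intro h0
        rw [Set.ncard_eq_zero hfin] at h0
        simp [h0] at hmem
      omega
    obtain ⟨h1, _⟩ := ih (k - 1) (by omega) G' hGconn' hncard
    constructor
    · omega
    · intro hEq; omega



lemma edgeSet_finset_eq {T : Finset (Sym2 V)} (hd : ∀ e ∈ T, ¬ e.IsDiag) :
    (fromEdgeSet (T : Set (Sym2 V))).edgeSet = (T : Set (Sym2 V)) := by
  rw [edgeSet_fromEdgeSet]
  ext e
  simp only [Set.mem_diff, Set.mem_setOf_eq, Finset.mem_coe]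
  exact ⟨fun h => h.1, fun h => ⟨h, hd e h⟩⟩

/-- Criterion: an edge finset with no diagonals, connected graph, and `card V - 1` edges
is a tree. -/
lemma isTree_of_card {T : Finset (Sym2 V)} (hd : ∀ e ∈ T, ¬ e.IsDiag)
    (hc : (fromEdgeSet (T : Set (Sym2 V))).Connected)
    (hcard : T.card + 1 = Fintype.card V) :
    (fromEdgeSet (T : Set (Sym2 V))).IsTree := by
  obtain ⟨_, h2⟩ := connected_card_le _ hc
  refine ⟨hc, h2 ?_⟩
  rw [edgeSet_finset_eq hd, Set.ncard_coe_finset]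
  exact hcard

/-- In the graph with edge `s(a,b)` removed, any vertex that could reach `a`
can still reach `a` or `b`. -/
lemma reach_endpoint_aux {T : Finset (Sym2 V)} {a b : V} :
    ∀ {u c : V}, (fromEdgeSet (T : Set (Sym2 V))).Walk u c →
    (fromEdgeSet ((T.erase s(a, b) : Finset (Sym2 V)) : Set (Sym2 V))).Reachable u c ∨
    (fromEdgeSet ((T.erase s(a, b) : Finset (Sym2 V)) : Set (Sym2 V))).Reachable u a ∨
      (fromEdgeSet ((T.erase s(a, b) : Finset (Sym2 V)) : Set (Sym2 V))).Reachable u b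
  | _, _, SimpleGraph.Walk.nil => Or.inl (Reachable.refl _)
  | u, c, SimpleGraph.Walk.cons (v := d) hcd p => by
    by_cases hcase : s(u, d) = s(a, b)
    · rw [Sym2.eq_iff] at hcase
      rcases hcase with ⟨rfl, rfl⟩ | ⟨rfl, rfl⟩
      · exact Or.inr (Or.inl (Reachable.refl _))
      · exact Or.inr (Or.inr (Reachable.refl _))
    · have hadj : (fromEdgeSet ((T.erase s(a, b) : Finset (Sym2 V)) : Set (Sym2 V))).Adj u d := by
        rw [fromEdgeSet_adj] at hcd ⊢
        refine ⟨?_, hcd.2⟩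
        simp only [Finset.coe_erase, Set.mem_diff, Set.mem_singleton_iff]
        exact ⟨hcd.1, hcase⟩
      rcases reach_endpoint_aux p with h' | h' | h'
      · exact Or.inl (hadj.reachable.trans h')
      · exact Or.inr (Or.inl (hadj.reachable.trans h'))
      · exact Or.inr (Or.inr (hadj.reachable.trans h'))

lemma reach_endpoint {T : Finset (Sym2 V)} {a b u : V}
    (h : (fromEdgeSet (T : Set (Sym2 V))).Reachable u a) :
    (fromEdgeSet ((T.erase s(a, b) : Finset (Sym2 V)) : Set (Sym2 V))).Reachable u a ∨
      (fromEdgeSet ((T.erase s(a, b) : Finset (Sym2 V)) : Set (Sym2 V))).Reachable u b := by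
  obtain ⟨w⟩ := h
  rcases reach_endpoint_aux w with h' | h' | h'
  · exact Or.inl h'
  · exact Or.inl h'
  · exact Or.inr h'

/-- From a connected graph, extract the last edge `s(w,v)` of a path from `u` to `v`:
`u` can reach `w` even after this edge is deleted. -/
lemma exists_last_edge {T : Finset (Sym2 V)}
    (hc : (fromEdgeSet (T : Set (Sym2 V))).Connected) {u v : V} (huv : u ≠ v) :
    ∃ w, (fromEdgeSet (T : Set (Sym2 V))).Adj w v ∧
      (fromEdgeSet ((T.erase s(w, v) : Finset (Sym2 V)) : Set (Sym2 V))).Reachable u w := by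
  set G := fromEdgeSet (T : Set (Sym2 V)) with hG
  obtain ⟨p0⟩ := hc.preconnected u v
  let p : G.Path u v := p0.toPath
  have hrev : (p : G.Walk u v).reverse.IsPath := p.prop.reverse
  cases hw : (p : G.Walk u v).reverse with
  | nil => exact absurd rfl huv
  | @cons _ w _ hvw q =>
    rw [hw, Walk.cons_isPath_iff] at hrev
    obtain ⟨hq, hvs⟩ := hrev
    refine ⟨w, hvw.symm, ?_⟩
    have hnotin : ∀ e ∈ q.reverse.edges, e ∈ ((T.erase s(w, v) : Finset (Sym2 V)) : Set (Sym2 V)) := by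
      intro e he
      rw [Walk.edges_reverse, List.mem_reverse] at he
      have heT : e ∈ G.edgeSet := q.edges_subset_edgeSet he
      rw [hG, edgeSet_fromEdgeSet] at heT
      have hne : e ≠ s(w, v) := by
        rintro rfl
        exact hvs (q.snd_mem_support_of_mem_edges he)
      simp only [Finset.coe_erase, Set.mem_diff, Set.mem_singleton_iff]
      exact ⟨heT.1, hne⟩
    have hmono : ∀ a b : V,
        (fromEdgeSet ((T.erase s(w,v) : Finset (Sym2 V)) : Set (Sym2 V))).Adj a b →
        (fromEdgeSet ((T.erase s(w,v) : Finset (Sym2 V)) : Set (Sym2 V))).Adj a b := fun _ _ h => h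
    -- transfer q.reverse into the smaller graph
    refine ⟨(q.reverse.transfer (fromEdgeSet ((T.erase s(w,v) : Finset (Sym2 V)) : Set (Sym2 V))) ?_)⟩
    intro e he
    have h1 := hnotin e he
    rw [edgeSet_fromEdgeSet]
    refine ⟨h1, ?_⟩
    have heT : e ∈ G.edgeSet := q.reverse.edges_subset_edgeSet he
    rw [hG, edgeSet_fromEdgeSet] at heT
    exact heT.2

/-- Swap lemma: replacing edge `e = s(a,b)` of a connected graph by an edge `f`,
the result stays connected provided `a` and `b` remain mutually reachable. -/
lemma conn_insert_erase {T : Finset (Sym2 V)}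
    (hc : (fromEdgeSet (T : Set (Sym2 V))).Connected) {f : Sym2 V} {a b : V}
    (hre : (fromEdgeSet ((insert f (T.erase s(a, b)) : Finset (Sym2 V)) : Set (Sym2 V))).Reachable a b) :
    (fromEdgeSet ((insert f (T.erase s(a, b)) : Finset (Sym2 V)) : Set (Sym2 V))).Connected := by
  rw [connected_iff]
  refine ⟨fun u v => ?_, hc.nonempty⟩
  refine reachable_map_aux (id : V → V) (fun c d hcd => ?_) (hc.preconnected u v)
  by_cases hcase : s(c, d) = s(a, b)
  · rw [Sym2.eq_iff] at hcase
    rcases hcase with ⟨rfl, rfl⟩ | ⟨rfl, rfl⟩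
    · exact hre
    · exact hre.symm
  · refine Adj.reachable ?_
    rw [fromEdgeSet_adj] at hcd ⊢
    refine ⟨?_, hcd.2⟩
    simp only [Finset.coe_insert, Set.mem_insert_iff, Finset.mem_coe, Finset.mem_erase]
    exact Or.inr ⟨hcase, hcd.1⟩

/-- Monotonicity of reachability in `fromEdgeSet` graphs. -/
lemma reach_mono {T U : Finset (Sym2 V)} (hsub : T ⊆ U) {u v : V}
    (h : (fromEdgeSet (T : Set (Sym2 V))).Reachable u v) :
    (fromEdgeSet (U : Set (Sym2 V))).Reachable u v :=
  reachable_map_aux (id : V → V)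
    (fun _ _ hcd => (Adj.reachable (by
      rw [fromEdgeSet_adj] at hcd ⊢; exact ⟨hsub hcd.1, hcd.2⟩))) h

lemma card_of_tree {V : Type*} [Fintype V] [DecidableEq V] {T : Finset (Sym2 V)}
    (hd : ∀ e ∈ T, ¬ e.IsDiag)
    (ht : (fromEdgeSet (T : Set (Sym2 V))).IsTree) : T.card + 1 = Fintype.card V := by
  classical
  have h0 := ht.card_edgeFinset
  have h1 : (fromEdgeSet (T : Set (Sym2 V))).edgeSet.ncard
      = (fromEdgeSet (T : Set (Sym2 V))).edgeFinset.card := by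
    rw [← coe_edgeFinset, Set.ncard_coe_finset]
  have h2 : (fromEdgeSet (T : Set (Sym2 V))).edgeSet.ncard = T.card := by
    rw [edgeSet_finset_eq hd, Set.ncard_coe_finset]
  omega

section Weights

variable {n : ℕ}

/-- Symmetrized weight of an edge: weight of `s(i,j)` with `i < j` is `x i j`. -/
noncomputable def wfun (x : Fin n → Fin n → ℝ) : Sym2 (Fin n) → ℝ :=
  Sym2.lift ⟨fun i j => if i < j then x i j else x j i, by
    intro a b
    rcases lt_trichotomy a b with h | h | h
    · simp [h, not_lt.2 h.le]
    · subst h; simp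
    · simp [h, not_lt.2 h.le]⟩

lemma wfun_mk_of_lt (x : Fin n → Fin n → ℝ) {i j : Fin n} (h : i < j) :
    wfun x s(i, j) = x i j := by
  simp [wfun, Sym2.lift_mk, h]

lemma treeWeight_eq_sum (x : Fin n → Fin n → ℝ) (T : Finset (Sym2 (Fin n)))
    (hd : ∀ e ∈ T, ¬ e.IsDiag) :
    treeWeight x T = ∑ e ∈ T, wfun x e := by
  classical
  rw [treeWeight]
  refine Finset.sum_bij (fun p _ => s(p.1, p.2)) ?_ ?_ ?_ ?_
  · intro p hp
    rw [Finset.mem_filter] at hp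
    exact hp.2.2
  · intro p hp q hq hpq
    rw [Finset.mem_filter] at hp hq
    rw [Sym2.eq_iff] at hpq
    rcases hpq with ⟨h1, h2⟩ | ⟨h1, h2⟩
    · exact Prod.ext h1 h2
    · exact absurd (h1 ▸ h2 ▸ hp.2.1) (asymm hq.2.1)
  · intro e he
    induction e with
    | _ a b =>
      have hab : a ≠ b := by
        intro h; exact hd _ he (by simp [h])
      rcases lt_or_gt_of_ne hab with h | h
      · exact ⟨(a, b), Finset.mem_filter.2 ⟨Finset.mem_univ _, h, he⟩, rfl⟩
      · exact ⟨(b, a), Finset.mem_filter.2 ⟨Finset.mem_univ _, h, by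
          rwa [Sym2.eq_swap] at he⟩, Sym2.eq_swap⟩
  · intro p hp
    rw [Finset.mem_filter] at hp
    exact (wfun_mk_of_lt x hp.2.1).symm

end Weights

section Star

variable {V : Type*} [Fintype V] [DecidableEq V]

/-- The star on hub `v₀` is a spanning tree. -/
lemma star_tree (v₀ : V) :
    (∀ e ∈ (Finset.univ.erase v₀).image (fun u => s(v₀, u)), ¬ e.IsDiag) ∧
    (fromEdgeSet (((Finset.univ.erase v₀).image (fun u => s(v₀, u)) : Finset (Sym2 V)) : Set (Sym2 V))).IsTree := by
  classical
  set T := (Finset.univ.erase v₀).image (fun u => s(v₀, u)) with hT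
  have hd : ∀ e ∈ T, ¬ e.IsDiag := by
    intro e he
    rw [hT, Finset.mem_image] at he
    obtain ⟨u, hu, rfl⟩ := he
    rw [Finset.mem_erase] at hu
    simp [Sym2.mk_isDiag_iff, (hu.1 : u ≠ v₀).symm]
  refine ⟨hd, isTree_of_card hd ?_ ?_⟩
  · rw [connected_iff]
    refine ⟨fun u v => ?_, ⟨v₀⟩⟩
    have key : ∀ w : V, (fromEdgeSet (T : Set (Sym2 V))).Reachable w v₀ := by
      intro w
      by_cases hw : w = v₀
      · subst hw; exact Reachable.refl _
      · refine Adj.reachable ?_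
        rw [fromEdgeSet_adj]
        refine ⟨?_, hw⟩
        rw [Sym2.eq_swap]
        simp only [hT, Finset.coe_image, Set.mem_image, Finset.mem_coe, Finset.mem_erase]
        exact ⟨w, ⟨hw, Finset.mem_univ _⟩, rfl⟩
    exact (key u).trans (key v).symm
  · rw [hT, Finset.card_image_of_injOn, Finset.card_erase_of_mem (Finset.mem_univ _),
      Finset.card_univ]
    · have : 0 < Fintype.card V := Fintype.card_pos_iff.2 ⟨v₀⟩
      omega
    · intro u hu u' hu' h
      rw [Sym2.eq_iff] at h
      rw [Finset.mem_coe, Finset.mem_erase] at hu hu'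
      rcases h with ⟨-, h⟩ | ⟨h, h'⟩
      · exact h
      · exact absurd h' hu.1

end Star

/-- Spanning trees of the complete graph on `Fin m` exist for `m ≥ 1`. -/
lemma exists_isSpanningTree (m : ℕ) (hm : 1 ≤ m) : ∃ T : Finset (Sym2 (Fin m)), IsSpanningTree T := by
  obtain ⟨hd, ht⟩ := star_tree (⟨0, by omega⟩ : Fin m)
  exact ⟨_, ht, hd⟩

section Main

open SimpleGraph Finset

variable {m : ℕ}

/-- The reduced weights after star-mesh elimination of the last vertex. -/
noncomputable def xprime (x : Fin (m+1) → Fin (m+1) → ℝ) (y : ℝ) :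
    Fin m → Fin m → ℝ :=
  fun i j => min (x i.castSucc j.castSucc)
    (x i.castSucc (Fin.last m) + x j.castSucc (Fin.last m) - y)

variable (x : Fin (m+1) → Fin (m+1) → ℝ) (y : ℝ) (i' : Fin m)

lemma wfun_star (j : Fin m) : wfun x s(j.castSucc, Fin.last m) = x j.castSucc (Fin.last m) :=
  wfun_mk_of_lt x (Fin.castSucc_lt_last j)

/-- Exchange step: any spanning tree can be modified to contain the cheapest star edge
`s(i'.castSucc, last)` without increasing weight. -/
lemma exchange (hmin : ∀ j : Fin m, y ≤ x j.castSucc (Fin.last m))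
    (hy : x i'.castSucc (Fin.last m) = y)
    (T : Finset (Sym2 (Fin (m+1)))) (hT : IsSpanningTree T) :
    ∃ U, IsSpanningTree U ∧ s(i'.castSucc, Fin.last m) ∈ U ∧
      treeWeight x U ≤ treeWeight x T := by
  classical
  set fstar : Sym2 (Fin (m+1)) := s(i'.castSucc, Fin.last m) with hfstar
  by_cases hf : fstar ∈ T
  · exact ⟨T, hT, hf, le_refl _⟩
  obtain ⟨htree, hd⟩ := hT
  have hc : (fromEdgeSet (T : Set (Sym2 (Fin (m+1))))).Connected := htree.isConnected
  have hne : i'.castSucc ≠ Fin.last m := (Fin.castSucc_lt_last i').ne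
  obtain ⟨w, hwadj, hwreach⟩ := exists_last_edge hc hne
  rw [fromEdgeSet_adj] at hwadj
  have hwe : s(w, Fin.last m) ∈ T := hwadj.1
  have hwne : s(w, Fin.last m) ≠ fstar := fun h => hf (h ▸ hwe)
  have hwlast : w ≠ Fin.last m := hwadj.2
  obtain ⟨w', rfl⟩ := Fin.exists_castSucc_eq.mpr hwlast
  set U : Finset (Sym2 (Fin (m+1))) := insert fstar (T.erase s(w'.castSucc, Fin.last m)) with hU
  have hfni : fstar ∉ T.erase s(w'.castSucc, Fin.last m) := fun h => hf (Finset.mem_of_mem_erase h)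
  have hdU : ∀ e ∈ U, ¬ e.IsDiag := by
    intro e he
    rw [hU, Finset.mem_insert] at he
    rcases he with rfl | he
    · simp [hfstar, Sym2.mk_isDiag_iff, hne]
    · exact hd _ (Finset.mem_of_mem_erase he)
  have hcardU : U.card + 1 = Fintype.card (Fin (m+1)) := by
    rw [hU, Finset.card_insert_of_notMem hfni, Finset.card_erase_of_mem hwe]
    have hT1 : T.card + 1 = Fintype.card (Fin (m+1)) := card_of_tree hd htree
    have hTpos : 1 ≤ T.card := by
      rcases Finset.eq_empty_or_nonempty T with rfl | h
      · simp at hwe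
      · exact Finset.card_pos.2 h
    simp only [Fintype.card_fin] at hT1 ⊢
    omega
  have hconnU : (fromEdgeSet (U : Set (Sym2 (Fin (m+1))))).Connected := by
    rw [hU]
    refine conn_insert_erase hc ?_
    have h1 : (fromEdgeSet ((insert fstar (T.erase s(w'.castSucc, Fin.last m)) : Finset (Sym2 (Fin (m+1)))) : Set (Sym2 (Fin (m+1))))).Reachable w'.castSucc i'.castSucc :=
      reach_mono (Finset.subset_insert _ _) hwreach.symm
    refine h1.trans (Adj.reachable ?_)
    rw [fromEdgeSet_adj]
    exact ⟨by simp [hfstar], hne⟩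
  refine ⟨U, ⟨isTree_of_card hdU hconnU hcardU, hdU⟩, Finset.mem_insert_self _ _, ?_⟩
  rw [treeWeight_eq_sum x U hdU, treeWeight_eq_sum x T hd, hU,
    Finset.sum_insert hfni, Finset.sum_erase_eq_sub hwe]
  have h1 : wfun x fstar = y := by rw [hfstar, wfun_star, hy]
  have h2 : wfun x s(w'.castSucc, Fin.last m) = x w'.castSucc (Fin.last m) := wfun_star x w'
  have h3 := hmin w'
  rw [h1, h2]
  linarith

end Main

section Project

open SimpleGraph Finset

variable {m : ℕ}

/-- Vertex projection collapsing the last vertex onto `i'`. -/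
def rhoMap (i' : Fin m) : Fin (m+1) → Fin m :=
  fun v => if h : (v : ℕ) < m then ⟨v, h⟩ else i'

lemma rhoMap_castSucc (i' : Fin m) (j : Fin m) : rhoMap i' j.castSucc = j := by
  simp only [rhoMap, Fin.coe_castSucc, j.isLt, dif_pos]

lemma rhoMap_last (i' : Fin m) : rhoMap i' (Fin.last m) = i' := by
  simp [rhoMap]

lemma eq_last_of_not_lt {v : Fin (m+1)} (h : ¬ (v : ℕ) < m) : v = Fin.last m :=
  Fin.ext (by have := v.isLt; simp only [Fin.val_last]; omega)

lemma rhoMap_ne (i' : Fin m) {a b : Fin (m+1)} (hab : a ≠ b)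
    (hne : s(a, b) ≠ s(i'.castSucc, Fin.last m)) : rhoMap i' a ≠ rhoMap i' b := by
  intro h
  by_cases ha : (a : ℕ) < m <;> by_cases hb : (b : ℕ) < m
  · simp only [rhoMap, dif_pos ha, dif_pos hb] at h
    rw [Fin.mk.injEq] at h
    exact hab (Fin.ext h)
  · have hbl : b = Fin.last m := eq_last_of_not_lt hb
    subst hbl
    simp only [rhoMap, dif_pos ha, dif_neg hb] at h
    apply hne
    have : a = i'.castSucc := by
      rw [← h]; exact Fin.ext rfl
    rw [this]
  · have hal : a = Fin.last m := eq_last_of_not_lt ha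
    subst hal
    simp only [rhoMap, dif_pos hb, dif_neg ha] at h
    apply hne
    have : b = i'.castSucc := by
      rw [h]; exact Fin.ext rfl
    rw [this, Sym2.eq_swap]
  · exact hab ((eq_last_of_not_lt ha).trans (eq_last_of_not_lt hb).symm)

variable (x : Fin (m+1) → Fin (m+1) → ℝ) (y : ℝ) (i' : Fin m)

lemma wfun_proj_le_core (hy : x i'.castSucc (Fin.last m) = y)
    {a b : Fin (m+1)} (hab : a < b) (hne : s(a, b) ≠ s(i'.castSucc, Fin.last m)) :
    wfun (xprime x y) s(rhoMap i' a, rhoMap i' b) ≤ wfun x s(a, b) := by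
  have ham : (a : ℕ) < m := by
    have h1 : (a : ℕ) < (b : ℕ) := hab
    have := b.isLt; omega
  set a₀ : Fin m := ⟨(a : ℕ), ham⟩ with ha₀
  have haa : a₀.castSucc = a := Fin.ext rfl
  have hra : rhoMap i' a = a₀ := by simp only [rhoMap, dif_pos ham]; rfl
  rw [wfun_mk_of_lt x hab]
  by_cases hbm : (b : ℕ) < m
  · set b₀ : Fin m := ⟨(b : ℕ), hbm⟩ with hb₀
    have hbb : b₀.castSucc = b := Fin.ext rfl
    have hrb : rhoMap i' b = b₀ := by simp only [rhoMap, dif_pos hbm]; rfl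
    have hlt : a₀ < b₀ := hab
    rw [hra, hrb, wfun_mk_of_lt _ hlt]
    calc xprime x y a₀ b₀ ≤ x a₀.castSucc b₀.castSucc := min_le_left _ _
    _ = x a b := by rw [haa, hbb]
  · have hbl : b = Fin.last m := eq_last_of_not_lt hbm
    subst hbl
    have hrb : rhoMap i' (Fin.last m) = i' := rhoMap_last i'
    have hai : a₀ ≠ i' := by
      intro h
      exact hne (by rw [← haa, h])
    have hstar : xprime x y a₀ i' ≤ x a (Fin.last m) := by
      calc xprime x y a₀ i'
          ≤ x a₀.castSucc (Fin.last m) + x i'.castSucc (Fin.last m) - y := min_le_right _ _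
        _ = x a (Fin.last m) := by rw [haa, hy]; ring
    have hstar' : xprime x y i' a₀ ≤ x a (Fin.last m) := by
      calc xprime x y i' a₀
          ≤ x i'.castSucc (Fin.last m) + x a₀.castSucc (Fin.last m) - y := min_le_right _ _
        _ = x a (Fin.last m) := by rw [haa, hy]; ring
    rw [hra, hrb]
    rcases lt_or_gt_of_ne hai with h | h
    · rw [wfun_mk_of_lt _ h]; exact hstar
    · rw [Sym2.eq_swap, wfun_mk_of_lt _ h]; exact hstar'

lemma wfun_proj_le (hy : x i'.castSucc (Fin.last m) = y)
    {a b : Fin (m+1)} (hab : a ≠ b) (hne : s(a, b) ≠ s(i'.castSucc, Fin.last m)) :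
    wfun (xprime x y) (Sym2.map (rhoMap i') s(a, b)) ≤ wfun x s(a, b) := by
  rw [Sym2.map_pair_eq]
  rcases lt_or_gt_of_ne hab with h | h
  · exact wfun_proj_le_core x y i' hy h hne
  · rw [Sym2.eq_swap, (Sym2.eq_swap : s(a,b) = s(b,a))]
    exact wfun_proj_le_core x y i' hy h (by rwa [← Sym2.eq_swap])

/-- Projection: a spanning tree of `K_{m+1}` containing the cheapest star edge projects to a
spanning tree of `K_m` under the reduced weights, decreasing total weight by `y`. -/
lemma project (hm : 2 ≤ m) (hy : x i'.castSucc (Fin.last m) = y)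
    (U : Finset (Sym2 (Fin (m+1)))) (hU : IsSpanningTree U)
    (hf : s(i'.castSucc, Fin.last m) ∈ U) :
    ∃ T' : Finset (Sym2 (Fin m)), IsSpanningTree T' ∧
      y + treeWeight (xprime x y) T' ≤ treeWeight x U := by
  classical
  obtain ⟨htree, hd⟩ := hU
  set fstar : Sym2 (Fin (m+1)) := s(i'.castSucc, Fin.last m) with hfstar
  set ρ := rhoMap i' with hρ
  set T' : Finset (Sym2 (Fin m)) := (U.erase fstar).image (Sym2.map ρ) with hT'
  have hcardU : U.card = m := by
    have := card_of_tree hd htree; simpa using this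
  have hdT' : ∀ e ∈ T', ¬ e.IsDiag := by
    intro e he
    rw [hT', Finset.mem_image] at he
    obtain ⟨e₀, he₀, rfl⟩ := he
    induction e₀ using Sym2.ind with
    | _ a b =>
      rw [Finset.mem_erase] at he₀
      have hab : a ≠ b := by
        intro h; exact hd _ he₀.2 (by simp [h])
      rw [Sym2.map_pair_eq, Sym2.mk_isDiag_iff]
      exact rhoMap_ne i' hab he₀.1
  have hconn' : (fromEdgeSet (T' : Set (Sym2 (Fin m)))).Connected := by
    have htrans : ∀ a b : Fin (m+1),
        (fromEdgeSet (U : Set (Sym2 (Fin (m+1))))).Adj a b →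
        (fromEdgeSet (T' : Set (Sym2 (Fin m)))).Reachable (ρ a) (ρ b) := by
      intro a b hadj
      rw [fromEdgeSet_adj] at hadj
      by_cases hcase : s(a, b) = fstar
      · rw [hfstar, Sym2.eq_iff] at hcase
        rcases hcase with ⟨rfl, rfl⟩ | ⟨rfl, rfl⟩
        · rw [hρ, rhoMap_castSucc, rhoMap_last]
        · rw [hρ, rhoMap_castSucc, rhoMap_last]
      · refine Adj.reachable ?_
        rw [fromEdgeSet_adj]
        constructor
        · rw [hT']
          simp only [Finset.coe_image, Set.mem_image, Finset.mem_coe, Finset.mem_erase]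
          exact ⟨s(a, b), ⟨hcase, hadj.1⟩, by rw [Sym2.map_pair_eq]⟩
        · exact rhoMap_ne i' hadj.2 (by rwa [hfstar] at hcase)
    rw [connected_iff]
    refine ⟨fun u v => ?_, ⟨i'⟩⟩
    have h1 := reachable_map_aux ρ htrans (htree.isConnected.preconnected u.castSucc v.castSucc)
    rwa [hρ, rhoMap_castSucc, rhoMap_castSucc] at h1
  have hcerase : (U.erase fstar).card = m - 1 := by
    rw [Finset.card_erase_of_mem hf]; omega
  have hcardle : T'.card ≤ m - 1 := by
    calc T'.card ≤ (U.erase fstar).card := Finset.card_image_le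
    _ = m - 1 := hcerase
  have hcardge : m ≤ T'.card + 1 := by
    have h1 := (connected_card_le _ hconn').1
    rwa [edgeSet_finset_eq hdT', Set.ncard_coe_finset, Fintype.card_fin] at h1
  have hcardT' : T'.card + 1 = m := by omega
  have hinj : ∀ e₁ ∈ U.erase fstar, ∀ e₂ ∈ U.erase fstar,
      Sym2.map ρ e₁ = Sym2.map ρ e₂ → e₁ = e₂ := by
    have hcardeq : ((U.erase fstar).image (Sym2.map ρ)).card = (U.erase fstar).card := by
      rw [← hT', hcerase]
      omega
    have := Finset.injOn_of_card_image_eq hcardeq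
    intro e₁ h₁ e₂ h₂ h
    exact this (Finset.mem_coe.mpr h₁) (Finset.mem_coe.mpr h₂) h
  refine ⟨T', ⟨isTree_of_card hdT' hconn' (by simpa using hcardT'), hdT'⟩, ?_⟩
  rw [treeWeight_eq_sum _ _ hdT', treeWeight_eq_sum _ _ hd, hT', Finset.sum_image hinj]
  have hsum : ∑ e ∈ U.erase fstar, wfun (xprime x y) (Sym2.map ρ e)
      ≤ ∑ e ∈ U.erase fstar, wfun x e := by
    refine Finset.sum_le_sum ?_
    intro e he
    rw [Finset.mem_erase] at he
    obtain ⟨hene, hemem⟩ := he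
    induction e using Sym2.ind with
    | _ a b =>
      have hab : a ≠ b := by
        intro h; exact hd _ hemem (by simp [h])
      exact wfun_proj_le x y i' hy hab (by rwa [hfstar] at hene)
  have hUsum : ∑ e ∈ U.erase fstar, wfun x e = (∑ e ∈ U, wfun x e) - wfun x fstar :=
    Finset.sum_erase_eq_sub hf
  have hwf : wfun x fstar = y := by
    rw [hfstar, wfun_star, hy]
  linarith

end Project

section Improve

open SimpleGraph Finset

variable {m : ℕ}

/-- Cost of routing an edge through the star at the last vertex. -/
noncomputable def starCost (x : Fin (m+1) → Fin (m+1) → ℝ) (y : ℝ) : Sym2 (Fin (m+1)) → ℝ :=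
  Sym2.lift ⟨fun a b => x a (Fin.last m) + x b (Fin.last m) - y, by intro a b; ring⟩

lemma starCost_mk (x : Fin (m+1) → Fin (m+1) → ℝ) (y : ℝ) (a b : Fin (m+1)) :
    starCost x y s(a, b) = x a (Fin.last m) + x b (Fin.last m) - y := rfl

variable (x : Fin (m+1) → Fin (m+1) → ℝ) (y : ℝ)

/-- Swap step: replace edge `s(a,b)` of a spanning tree by `s(a, last)`, when `last`
can reach `b` after removing `s(a,b)`. -/
lemma improve_step {U : Finset (Sym2 (Fin (m+1)))} (hU : IsSpanningTree U)
    {a b : Fin (m+1)} (hab : a ≠ b) (hal : a ≠ Fin.last m) (hbl : b ≠ Fin.last m)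
    (hmem : s(a, b) ∈ U)
    (hreach : (fromEdgeSet ((U.erase s(a, b) : Finset (Sym2 (Fin (m+1)))) : Set (Sym2 (Fin (m+1))))).Reachable (Fin.last m) b) :
    IsSpanningTree (insert s(a, Fin.last m) (U.erase s(a, b))) ∧ s(a, Fin.last m) ∉ U := by
  classical
  obtain ⟨htree, hd⟩ := hU
  have hc := htree.isConnected
  have hfne : s(a, Fin.last m) ≠ s(a, b) := by
    intro h
    rw [Sym2.eq_iff] at h
    rcases h with ⟨-, h2⟩ | ⟨h1, -⟩
    · exact hbl h2.symm
    · exact hab h1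
  -- the new edge is not already in U (else U would contain a cycle)
  have hnotU : s(a, Fin.last m) ∉ U := by
    intro hin
    have hadj : (fromEdgeSet ((U.erase s(a, b) : Finset (Sym2 (Fin (m+1)))) : Set (Sym2 (Fin (m+1))))).Adj a (Fin.last m) := by
      rw [fromEdgeSet_adj]
      exact ⟨by rw [Finset.coe_erase]; exact ⟨hin, hfne⟩, hal⟩
    have hreach2 : (fromEdgeSet ((U.erase s(a, b) : Finset (Sym2 (Fin (m+1)))) : Set (Sym2 (Fin (m+1))))).Reachable a b :=
      hadj.reachable.trans hreach
    have hbridge : (fromEdgeSet (U : Set (Sym2 (Fin (m+1))))).IsBridge s(a, b) := by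
      refine (isAcyclic_iff_forall_adj_isBridge.mp htree.IsAcyclic) ?_
      rw [fromEdgeSet_adj]
      exact ⟨hmem, hab⟩
    rw [isBridge_iff] at hbridge
    refine hbridge ?_
    refine reachable_map_aux (id : Fin (m+1) → Fin (m+1)) (fun c d hcd => Adj.reachable ?_) hreach2
    rw [fromEdgeSet_adj] at hcd
    rw [deleteEdges_adj, fromEdgeSet_adj]
    rw [Finset.coe_erase, Set.mem_diff, Set.mem_singleton_iff] at hcd
    exact ⟨⟨hcd.1.1, hcd.2⟩, hcd.1.2⟩
  have hnotin : s(a, Fin.last m) ∉ U.erase s(a, b) := fun h => hnotU (Finset.mem_of_mem_erase h)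
  have hdU₂ : ∀ e ∈ insert s(a, Fin.last m) (U.erase s(a, b)), ¬ e.IsDiag := by
    intro e he
    rw [Finset.mem_insert] at he
    rcases he with rfl | he
    · simp [Sym2.mk_isDiag_iff, hal]
    · exact hd _ (Finset.mem_of_mem_erase he)
  have hcardU : U.card = m + 1 - 1 := by
    have := card_of_tree hd htree
    simp only [Fintype.card_fin] at this
    omega
  have hcard₂ : (insert s(a, Fin.last m) (U.erase s(a, b))).card + 1 = Fintype.card (Fin (m+1)) := by
    rw [Finset.card_insert_of_notMem hnotin, Finset.card_erase_of_mem hmem]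
    have hUpos : 1 ≤ U.card := Finset.card_pos.2 ⟨_, hmem⟩
    simp only [Fintype.card_fin]
    omega
  have hconn₂ : (fromEdgeSet ((insert s(a, Fin.last m) (U.erase s(a, b)) : Finset (Sym2 (Fin (m+1)))) : Set (Sym2 (Fin (m+1))))).Connected := by
    refine conn_insert_erase hc ?_
    have h1 : (fromEdgeSet ((insert s(a, Fin.last m) (U.erase s(a, b)) : Finset (Sym2 (Fin (m+1)))) : Set (Sym2 (Fin (m+1))))).Adj a (Fin.last m) := by
      rw [fromEdgeSet_adj]
      exact ⟨by simp, hal⟩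
    exact h1.reachable.trans (reach_mono (Finset.subset_insert _ _) hreach)
  exact ⟨⟨isTree_of_card hdU₂ hconn₂ hcard₂, hdU₂⟩, hnotU⟩

end Improve

section ImproveRec

open SimpleGraph Finset

variable {m : ℕ} (x : Fin (m+1) → Fin (m+1) → ℝ) (y : ℝ)

lemma improve (hmin : ∀ j : Fin m, y ≤ x j.castSucc (Fin.last m)) :
    ∀ (k : ℕ) (U B : Finset (Sym2 (Fin (m+1)))), B.card = k → IsSpanningTree U →
      B ⊆ U → (∀ e ∈ B, (Fin.last m) ∉ e) →
      ∃ W, IsSpanningTree W ∧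
        treeWeight x W ≤ ∑ e ∈ U \ B, wfun x e + ∑ e ∈ B, starCost x y e := by
  classical
  intro k
  induction k with
  | zero =>
    intro U B hcard hU _ _
    rw [Finset.card_eq_zero] at hcard
    subst hcard
    refine ⟨U, hU, ?_⟩
    rw [Finset.sdiff_empty, Finset.sum_empty, add_zero, treeWeight_eq_sum x U hU.2]
  | succ k ih =>
    intro U B hcard hU hBU hBlast
    have hBne : B.Nonempty := Finset.card_pos.mp (by omega)
    obtain ⟨e, heB⟩ := hBne
    induction e using Sym2.ind with
    | _ a b =>
    have heU : s(a, b) ∈ U := hBU heB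
    have hab : a ≠ b := by
      intro h; exact hU.2 _ heU (by simp [h])
    have hlast := hBlast _ heB
    rw [Sym2.mem_iff] at hlast
    push_neg at hlast
    have hal : a ≠ Fin.last m := fun h => hlast.1 h.symm
    have hbl : b ≠ Fin.last m := fun h => hlast.2 h.symm
    have hstar_ab : ∀ c d : Fin (m+1), c ≠ Fin.last m → d ≠ Fin.last m →
        x c (Fin.last m) ≤ x c (Fin.last m) + x d (Fin.last m) - y := by
      intro c d hc hdl
      obtain ⟨d₀, rfl⟩ := Fin.exists_castSucc_eq.mpr hdl
      have := hmin d₀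
      linarith
    -- last can reach a or b in the graph with s(a,b) removed
    have hreach0 : (fromEdgeSet (U : Set (Sym2 (Fin (m+1))))).Reachable (Fin.last m) a :=
      hU.1.isConnected.preconnected _ _
    have key : ∀ c d : Fin (m+1), c ≠ d → c ≠ Fin.last m → d ≠ Fin.last m →
        s(c, d) ∈ U → s(c, d) = s(a, b) →
        (fromEdgeSet ((U.erase s(c, d) : Finset (Sym2 (Fin (m+1)))) : Set (Sym2 (Fin (m+1))))).Reachable (Fin.last m) d →
        ∃ W, IsSpanningTree W ∧
          treeWeight x W ≤ ∑ e ∈ U \ B, wfun x e + ∑ e ∈ B, starCost x y e := by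
      intro c d hcd hcl hdl hcdU hcdab hreach
      obtain ⟨hU₂, hnotU⟩ := improve_step hU hcd hcl hdl hcdU hreach
      set f' : Sym2 (Fin (m+1)) := s(c, Fin.last m) with hf'
      set U₂ : Finset (Sym2 (Fin (m+1))) := insert f' (U.erase s(c, d)) with hU₂def
      set B' : Finset (Sym2 (Fin (m+1))) := B.erase s(a, b) with hB'
      have hf'B : f' ∉ B := by
        intro hin
        have := hBlast _ hin
        rw [hf', Sym2.mem_iff] at this
        push_neg at this
        exact this.2 rfl
      have hf'U : f' ∉ U \ B := fun h => hnotU (Finset.mem_sdiff.mp h).1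
      have hB'U₂ : B' ⊆ U₂ := by
        intro g hg
        rw [hB', Finset.mem_erase] at hg
        rw [hU₂def, Finset.mem_insert]
        right
        rw [Finset.mem_erase]
        exact ⟨by rw [← hcdab] at hg; exact hg.1, hBU hg.2⟩
      have hB'last : ∀ e ∈ B', (Fin.last m) ∉ e := fun e he =>
        hBlast e (Finset.mem_of_mem_erase he)
      have hB'card : B'.card = k := by
        rw [hB', Finset.card_erase_of_mem heB]; omega
      obtain ⟨W, hW, hWle⟩ := ih U₂ B' hB'card hU₂ hB'U₂ hB'last
      refine ⟨W, hW, le_trans hWle ?_⟩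
      have hsdiff : U₂ \ B' = insert f' (U \ B) := by
        ext g
        rw [hU₂def, hB']
        simp only [Finset.mem_sdiff, Finset.mem_insert, Finset.mem_erase]
        constructor
        · rintro ⟨h1 | ⟨hgne, hgU⟩, h2⟩
          · exact Or.inl h1
          · refine Or.inr ⟨hgU, fun hgB => h2 ⟨?_, hgB⟩⟩
            rw [← hcdab]; exact hgne
        · rintro (rfl | ⟨h1, h2⟩)
          · exact ⟨Or.inl rfl, fun hg => hf'B hg.2⟩
          · refine ⟨Or.inr ⟨?_, h1⟩, fun hg => h2 hg.2⟩
            intro hge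
            rw [hcdab] at hge
            exact h2 (hge ▸ heB)
      have hsum1 : ∑ e ∈ U₂ \ B', wfun x e = wfun x f' + ∑ e ∈ U \ B, wfun x e := by
        rw [hsdiff, Finset.sum_insert hf'U]
      have hsum2 : ∑ e ∈ B', starCost x y e + starCost x y s(a, b) = ∑ e ∈ B, starCost x y e := by
        rw [hB']
        exact Finset.sum_erase_add _ _ heB
      have hwff' : wfun x f' = x c (Fin.last m) := by
        rw [hf']
        obtain ⟨c₀, rfl⟩ := Fin.exists_castSucc_eq.mpr hcl
        exact wfun_star x c₀
      have hstarcd : starCost x y s(a, b) = x c (Fin.last m) + x d (Fin.last m) - y := by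
        rw [← hcdab, starCost_mk]
      have hle : wfun x f' ≤ starCost x y s(a, b) := by
        rw [hwff', hstarcd]
        exact hstar_ab c d hcl hdl
      rw [hsum1, ← hsum2]
      linarith
    rcases reach_endpoint (b := b) hreach0 with hr | hr
    · -- last reaches a after removing s(a,b): swap to s(b, last)
      refine key b a hab.symm hbl hal (by rwa [Sym2.eq_swap]) (Sym2.eq_swap) ?_
      rwa [(Sym2.eq_swap : s(b, a) = s(a, b))]
    · exact key a b hab hal hbl heU rfl hr

end ImproveRec

section Lift

open SimpleGraph Finset

variable {m : ℕ} (x : Fin (m+1) → Fin (m+1) → ℝ) (y : ℝ) (i' : Fin m)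

lemma wfun_lift (u v : Fin m) (huv : u ≠ v) :
    wfun (xprime x y) s(u, v) =
      min (wfun x s(u.castSucc, v.castSucc)) (starCost x y s(u.castSucc, v.castSucc)) := by
  have core : ∀ u v : Fin m, u < v →
      wfun (xprime x y) s(u, v) =
        min (wfun x s(u.castSucc, v.castSucc)) (starCost x y s(u.castSucc, v.castSucc)) := by
    intro u v h
    have h2 : u.castSucc < v.castSucc := by rwa [Fin.castSucc_lt_castSucc_iff]
    rw [wfun_mk_of_lt _ h, wfun_mk_of_lt _ h2, starCost_mk]
    rfl
  rcases lt_or_gt_of_ne huv with h | h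
  · exact core u v h
  · rw [(Sym2.eq_swap : s(u, v) = s(v, u)),
      (Sym2.eq_swap : s(u.castSucc, v.castSucc) = s(v.castSucc, u.castSucc))]
    exact core v u h

/-- Lifting: from a spanning tree of `K_m` under reduced weights, build a spanning tree of
`K_{m+1}` of weight at most `y` plus the reduced weight. -/
lemma lift_tree (hm : 2 ≤ m) (hmin : ∀ j : Fin m, y ≤ x j.castSucc (Fin.last m))
    (hy : x i'.castSucc (Fin.last m) = y)
    (T' : Finset (Sym2 (Fin m))) (hT' : IsSpanningTree T') :
    ∃ W : Finset (Sym2 (Fin (m+1))), IsSpanningTree W ∧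
      treeWeight x W ≤ y + treeWeight (xprime x y) T' := by
  classical
  obtain ⟨htree', hd'⟩ := hT'
  set fstar : Sym2 (Fin (m+1)) := s(i'.castSucc, Fin.last m) with hfstar
  set L : Finset (Sym2 (Fin (m+1))) := T'.image (Sym2.map Fin.castSucc) with hL
  have hinj : Function.Injective (Sym2.map (Fin.castSucc : Fin m → Fin (m+1))) :=
    Sym2.map.injective (Fin.castSucc_injective m)
  have hLlast : ∀ e ∈ L, (Fin.last m) ∉ e := by
    intro e he
    rw [hL, Finset.mem_image] at he
    obtain ⟨e₀, _, rfl⟩ := he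
    rw [Sym2.mem_map]
    rintro ⟨a, -, ha⟩
    exact (Fin.castSucc_lt_last a).ne ha
  have hfL : fstar ∉ L := by
    intro h
    exact hLlast _ h (by rw [hfstar, Sym2.mem_iff]; exact Or.inr rfl)
  set U₀ : Finset (Sym2 (Fin (m+1))) := insert fstar L with hU₀
  have hdU₀ : ∀ e ∈ U₀, ¬ e.IsDiag := by
    intro e he
    rw [hU₀, Finset.mem_insert] at he
    rcases he with rfl | he
    · simp [hfstar, Sym2.mk_isDiag_iff]
    · rw [hL, Finset.mem_image] at he
      obtain ⟨e₀, he₀, rfl⟩ := he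
      induction e₀ using Sym2.ind with
      | _ u v =>
        have huv : u ≠ v := by
          intro h; exact hd' _ he₀ (by simp [h])
        rw [Sym2.map_pair_eq, Sym2.mk_isDiag_iff]
        exact fun h => huv (Fin.castSucc_injective m h)
  have hcardT' : T'.card + 1 = m := by
    have := card_of_tree hd' htree'
    simpa using this
  have hcardU₀ : U₀.card + 1 = Fintype.card (Fin (m+1)) := by
    rw [hU₀, Finset.card_insert_of_notMem hfL, hL, Finset.card_image_of_injective _ hinj]
    simp only [Fintype.card_fin]
    omega
  have hconnU₀ : (fromEdgeSet (U₀ : Set (Sym2 (Fin (m+1))))).Connected := by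
    have hkey : ∀ v : Fin (m+1), (fromEdgeSet (U₀ : Set (Sym2 (Fin (m+1))))).Reachable v (Fin.last m) := by
      intro v
      by_cases hv : v = Fin.last m
      · subst hv; exact Reachable.refl _
      · obtain ⟨v₀, rfl⟩ := Fin.exists_castSucc_eq.mpr hv
        have h1 : (fromEdgeSet (U₀ : Set (Sym2 (Fin (m+1))))).Reachable v₀.castSucc i'.castSucc := by
          refine reachable_map_aux (Fin.castSucc : Fin m → Fin (m+1)) ?_
            (htree'.isConnected.preconnected v₀ i')
          intro a b hadj
          rw [fromEdgeSet_adj] at hadj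
          refine Adj.reachable ?_
          rw [fromEdgeSet_adj]
          constructor
          · rw [hU₀]
            simp only [Finset.coe_insert, Set.mem_insert_iff, Finset.mem_coe]
            right
            rw [hL, Finset.mem_image]
            exact ⟨s(a, b), hadj.1, by rw [Sym2.map_pair_eq]⟩
          · exact fun h => hadj.2 (Fin.castSucc_injective m h)
        refine h1.trans (Adj.reachable ?_)
        rw [fromEdgeSet_adj]
        refine ⟨by rw [hU₀]; simp [hfstar], (Fin.castSucc_lt_last i').ne⟩
    rw [connected_iff]
    exact ⟨fun u v => (hkey u).trans (hkey v).symm, ⟨Fin.last m⟩⟩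
  have hU₀tree : IsSpanningTree U₀ := ⟨isTree_of_card hdU₀ hconnU₀ hcardU₀, hdU₀⟩
  set p : Sym2 (Fin (m+1)) → Prop := fun e => starCost x y e < wfun x e with hp
  set B : Finset (Sym2 (Fin (m+1))) := L.filter p with hB
  have hBsub : B ⊆ U₀ := (Finset.filter_subset _ _).trans (Finset.subset_insert _ _)
  have hBlast : ∀ e ∈ B, (Fin.last m) ∉ e := fun e he => hLlast e (Finset.mem_of_mem_filter e he)
  obtain ⟨W, hW, hWle⟩ := improve x y hmin B.card U₀ B rfl hU₀tree hBsub hBlast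
  refine ⟨W, hW, le_trans hWle ?_⟩
  have hfB : fstar ∉ B := fun h => hfL (Finset.mem_of_mem_filter _ h)
  have hsd : U₀ \ B = insert fstar (L \ B) := by
    rw [hU₀]
    exact Finset.insert_sdiff_of_notMem _ hfB
  have hfLB : fstar ∉ L \ B := fun h => hfL (Finset.mem_sdiff.mp h).1
  have hwfstar : wfun x fstar = y := by rw [hfstar, wfun_star, hy]
  rw [hsd, Finset.sum_insert hfLB, hwfstar]
  have hLB : L \ B = L.filter (fun e => ¬ p e) := by
    rw [hB, Finset.filter_not]
  have h1 : ∑ e ∈ L.filter p, starCost x y e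
      = ∑ e ∈ L.filter p, min (wfun x e) (starCost x y e) :=
    Finset.sum_congr rfl (fun e he => by
      rw [Finset.mem_filter] at he
      exact (min_eq_right (le_of_lt he.2)).symm)
  have h2 : ∑ e ∈ L.filter (fun e => ¬ p e), wfun x e
      = ∑ e ∈ L.filter (fun e => ¬ p e), min (wfun x e) (starCost x y e) :=
    Finset.sum_congr rfl (fun e he => by
      rw [Finset.mem_filter] at he
      exact (min_eq_left (not_lt.mp he.2)).symm)
  have hsplit : ∑ e ∈ L \ B, wfun x e + ∑ e ∈ B, starCost x y e
      = ∑ e ∈ L, min (wfun x e) (starCost x y e) := by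
    rw [hLB, hB, h1, h2, add_comm]
    exact Finset.sum_filter_add_sum_filter_not L p _
  have himg : ∑ e ∈ L, min (wfun x e) (starCost x y e)
      = ∑ e₀ ∈ T', wfun (xprime x y) e₀ := by
    rw [hL, Finset.sum_image (fun a _ b _ h => hinj h)]
    refine Finset.sum_congr rfl ?_
    intro e₀ he₀
    induction e₀ using Sym2.ind with
    | _ u v =>
      have huv : u ≠ v := by
        intro h; exact hd' _ he₀ (by simp [h])
      rw [Sym2.map_pair_eq, ← wfun_lift x y u v huv]
  rw [add_assoc, hsplit, himg, ← treeWeight_eq_sum _ _ hd']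

end Lift

section Assembly

open SimpleGraph Finset

lemma mstSet_finite (q : ℕ) (x : Fin q → Fin q → ℝ) :
    {w : ℝ | ∃ T : Finset (Sym2 (Fin q)), IsSpanningTree T ∧ w = treeWeight x T}.Finite := by
  have : {w : ℝ | ∃ T : Finset (Sym2 (Fin q)), IsSpanningTree T ∧ w = treeWeight x T}
      = treeWeight x '' {T | IsSpanningTree T} := by
    ext w
    simp only [Set.mem_setOf_eq, Set.mem_image]
    exact ⟨fun ⟨T, hT, hw⟩ => ⟨T, hT, hw.symm⟩, fun ⟨T, hT, hw⟩ => ⟨T, hT, hw.symm⟩⟩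
  rw [this]
  exact Set.Finite.image _ (Set.toFinite _)

lemma mstValue_mem (q : ℕ) (hq : 1 ≤ q) (x : Fin q → Fin q → ℝ) :
    ∃ T : Finset (Sym2 (Fin q)), IsSpanningTree T ∧ mstValue q x = treeWeight x T := by
  have hne : {w : ℝ | ∃ T : Finset (Sym2 (Fin q)), IsSpanningTree T ∧ w = treeWeight x T}.Nonempty := by
    obtain ⟨T, hT⟩ := exists_isSpanningTree q hq
    exact ⟨treeWeight x T, T, hT, rfl⟩
  exact hne.csInf_mem (mstSet_finite q x)

lemma mstValue_le (q : ℕ) (x : Fin q → Fin q → ℝ) (T : Finset (Sym2 (Fin q)))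
    (hT : IsSpanningTree T) : mstValue q x ≤ treeWeight x T :=
  csInf_le (mstSet_finite q x).bddBelow ⟨T, hT, rfl⟩

lemma key_recursion (m : ℕ) (hm : 2 ≤ m) (x : Fin (m+1) → Fin (m+1) → ℝ) (y : ℝ) (i' : Fin m)
    (hy : x i'.castSucc (Fin.last m) = y)
    (hmin : ∀ j : Fin m, y ≤ x j.castSucc (Fin.last m)) :
    mstValue (m+1) x = y + mstValue m (xprime x y) := by
  refine le_antisymm ?_ ?_
  · obtain ⟨T', hT', hw'⟩ := mstValue_mem m (by omega) (xprime x y)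
    obtain ⟨W, hW, hWle⟩ := lift_tree x y i' hm hmin hy T' hT'
    calc mstValue (m+1) x ≤ treeWeight x W := mstValue_le _ _ _ hW
    _ ≤ y + treeWeight (xprime x y) T' := hWle
    _ = y + mstValue m (xprime x y) := by rw [hw']
  · obtain ⟨T, hT, hw⟩ := mstValue_mem (m+1) (by omega) x
    obtain ⟨U, hU, hfU, hUle⟩ := exchange x y i' hmin hy T hT
    obtain ⟨T'', hT'', hle⟩ := project x y i' hm hy U hU hfU
    have h1 : mstValue m (xprime x y) ≤ treeWeight (xprime x y) T'' := mstValue_le _ _ _ hT''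
    rw [hw]
    linarith

end Assembly

/-- The star-mesh recursion for minimum spanning trees (Algorithm 2 of the paper):
with `yₙ = min_{i ∈ [n-1]} x(i,n)` and `x'(i,j) = min (x(i,j), x(i,n)+x(j,n)-yₙ)`,
the MST value of `Kₙ` equals `yₙ` plus the MST value of `Kₙ₋₁` with weights `x'`. -/
theorem mst_star_mesh_recursion (n : ℕ) (hn : 3 ≤ n) (x : Fin n → Fin n → ℝ) :
    let last : Fin n := ⟨n - 1, by omega⟩
    let emb : Fin (n - 1) → Fin n := Fin.castLE (Nat.sub_le n 1)
    let y : ℝ := Finset.univ.inf' ⟨⟨0, by omega⟩, Finset.mem_univ _⟩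
      (fun i : Fin (n - 1) => x (emb i) last)
    let x' : Fin (n - 1) → Fin (n - 1) → ℝ :=
      fun i j => min (x (emb i) (emb j)) (x (emb i) last + x (emb j) last - y)
    mstValue n x = y + mstValue (n - 1) x' := by
  intro last emb y x'
  obtain ⟨m, rfl⟩ : ∃ m, n = m + 1 := ⟨n - 1, by omega⟩
  have hm : 2 ≤ m := by omega
  obtain ⟨i', -, hy'⟩ := Finset.exists_mem_eq_inf'
    (⟨⟨0, by omega⟩, Finset.mem_univ _⟩ : (Finset.univ : Finset (Fin (m + 1 - 1))).Nonempty)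
    (fun i : Fin (m + 1 - 1) => x (emb i) last)
  have hy : x (Fin.castSucc i') (Fin.last m) = y := hy'.symm
  have hmin : ∀ j : Fin m, y ≤ x (Fin.castSucc j) (Fin.last m) := by
    intro j
    exact Finset.inf'_le _ (Finset.mem_univ j)
  exact key_recursion m hm x y i' hy hmin
end

section
/- Let G* = (V, E*) be a directed graph with distinguished vertices s, t such that dist_{G*}(s,t) = k, let E*_k be the set of arcs lying on some s-t-path of length exactly k in G*, and let G' be obtained from G* by adding the reverse arcs of all arcs in E*_k. Then every shortest s-t-path in G' uses only arcs of E*, and consequently dist_{G'}(s,t) = k. -/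
/-- `f` is a directed walk of length `k` in the digraph with arc relation `A`. -/
def IsWalk {V : Type*} (A : V → V → Prop) (k : ℕ) (f : Fin (k + 1) → V) : Prop :=
  ∀ i : Fin k, A (f i.castSucc) (f i.succ)

/-- There is a directed walk of length exactly `k` from `u` to `v`. -/
def WalkLen {V : Type*} (A : V → V → Prop) (k : ℕ) (u v : V) : Prop :=
  ∃ f : Fin (k + 1) → V, IsWalk A k f ∧ f 0 = u ∧ f (Fin.last k) = v

/-- The arc `(a, b)` lies on some `s`-`t`-path of length exactly `k`. -/
def OnPath {V : Type*} (A : V → V → Prop) (k : ℕ) (s t a b : V) : Prop :=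
  ∃ f : Fin (k + 1) → V, IsWalk A k f ∧ f 0 = s ∧ f (Fin.last k) = t ∧
    ∃ i : Fin k, f i.castSucc = a ∧ f i.succ = b

/-- ℕ-indexed walks: easier to manipulate. -/
def NWalk {V : Type*} (A : V → V → Prop) (k : ℕ) (u v : V) : Prop :=
  ∃ g : ℕ → V, (∀ i < k, A (g i) (g (i + 1))) ∧ g 0 = u ∧ g k = v

section lemmas
variable {V : Type*} {A : V → V → Prop}

lemma fin_mk_eq {n a b : ℕ} (ha : a < n) (hb : b < n) (h : a = b) :
    (⟨a, ha⟩ : Fin n) = ⟨b, hb⟩ := by subst h; rfl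

lemma isWalk_segment {k : ℕ} {f : Fin (k + 1) → V} (hf : IsWalk A k f)
    {p q : ℕ} (hpq : p ≤ q) (hq : q ≤ k) :
    NWalk A (q - p) (f ⟨p, by omega⟩) (f ⟨q, by omega⟩) := by
  refine ⟨fun j => f ⟨min (p + j) q, by omega⟩, ?_, ?_, ?_⟩
  · intro j hj
    show A (f ⟨min (p + j) q, by omega⟩) (f ⟨min (p + (j + 1)) q, by omega⟩)
    rw [fin_mk_eq (a := min (p + j) q) (b := p + j) (by omega) (by omega) (by omega),
      fin_mk_eq (a := min (p + (j + 1)) q) (b := p + j + 1) (by omega) (by omega) (by omega)]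
    exact hf ⟨p + j, by omega⟩
  · show f ⟨min (p + 0) q, by omega⟩ = f ⟨p, by omega⟩
    rw [fin_mk_eq (a := min (p + 0) q) (b := p) (by omega) (by omega) (by omega)]
  · show f ⟨min (p + (q - p)) q, by omega⟩ = f ⟨q, by omega⟩
    rw [fin_mk_eq (a := min (p + (q - p)) q) (b := q) (by omega) (by omega) (by omega)]

lemma walkLen_iff_nwalk {k : ℕ} {u v : V} : WalkLen A k u v ↔ NWalk A k u v := by
  constructor
  · rintro ⟨f, hf, h0, hl⟩
    have := isWalk_segment hf (Nat.zero_le k) le_rfl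
    rw [Nat.sub_zero] at this
    have e0 : (⟨0, by omega⟩ : Fin (k + 1)) = 0 := Fin.ext (by simp)
    have el : (⟨k, by omega⟩ : Fin (k + 1)) = Fin.last k := Fin.ext (by simp)
    rwa [e0, el, h0, hl] at this
  · rintro ⟨g, hg, h0, hl⟩
    refine ⟨fun i => g i.val, ?_, ?_, ?_⟩
    · intro i; exact hg i.val i.isLt
    · simpa using h0
    · simpa using hl

lemma nwalk_zero (u : V) : NWalk A 0 u u :=
  ⟨fun _ => u, fun i hi => absurd hi (Nat.not_lt_zero i), rfl, rfl⟩

lemma nwalk_single {u v : V} (h : A u v) : NWalk A 1 u v := by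
  refine ⟨fun i => if i = 0 then u else v, ?_, by simp, by simp⟩
  intro i hi
  have : i = 0 := by omega
  subst this
  simpa using h

lemma nwalk_concat {m n : ℕ} {u v w : V} (h1 : NWalk A m u v) (h2 : NWalk A n v w) :
    NWalk A (m + n) u w := by
  obtain ⟨g1, ha1, h10, h1m⟩ := h1
  obtain ⟨g2, ha2, h20, h2n⟩ := h2
  refine ⟨fun i => if i ≤ m then g1 i else g2 (i - m), ?_, ?_, ?_⟩
  · intro i hi
    by_cases h : i + 1 ≤ m
    · simp only [if_pos (by omega : i ≤ m), if_pos h]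
      exact ha1 i (by omega)
    · by_cases h' : i ≤ m
      · have : i = m := by omega
        subst this
        simp only [if_pos le_rfl, if_neg h]
        have e : i + 1 - i = 1 := by omega
        rw [e, h1m, ← h20]
        exact ha2 0 (by omega)
      · simp only [if_neg h', if_neg (by omega : ¬ i + 1 ≤ m)]
        have e : i + 1 - m = (i - m) + 1 := by omega
        rw [e]
        exact ha2 (i - m) (by omega)
  · simp [h10]
  · by_cases h : m + n ≤ m
    · have hn : n = 0 := by omega
      subst hn
      simp only [Nat.add_zero, if_pos le_rfl]
      rw [h1m, ← h20, h2n]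
    · simp only [if_neg h]
      have e : m + n - m = n := by omega
      rw [e, h2n]

lemma nwalk_mono {B : V → V → Prop} (hAB : ∀ a b, A a b → B a b) {k : ℕ} {u v : V}
    (h : NWalk A k u v) : NWalk B k u v := by
  obtain ⟨g, hg, h0, hl⟩ := h
  exact ⟨g, fun i hi => hAB _ _ (hg i hi), h0, hl⟩

lemma onPath_nwalk {k : ℕ} {s t a b : V} (h : OnPath A k s t a b) :
    ∃ l, l + 1 ≤ k ∧ NWalk A l s a ∧ NWalk A (k - (l + 1)) b t := by
  obtain ⟨f, hf, h0, hl, i, ha, hb⟩ := h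
  refine ⟨i.val, i.isLt, ?_, ?_⟩
  · have := isWalk_segment hf (Nat.zero_le i.val) (by omega)
    rw [Nat.sub_zero] at this
    have e0 : (⟨0, by omega⟩ : Fin (k + 1)) = 0 := Fin.ext (by simp)
    have ei : (⟨i.val, by omega⟩ : Fin (k + 1)) = i.castSucc := Fin.ext (by simp)
    rwa [e0, ei, h0, ha] at this
  · have := isWalk_segment hf (by omega : i.val + 1 ≤ k) le_rfl
    have ei : (⟨i.val + 1, by omega⟩ : Fin (k + 1)) = i.succ := Fin.ext (by simp)
    have el : (⟨k, by omega⟩ : Fin (k + 1)) = Fin.last k := Fin.ext (by simp)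
    rwa [ei, el, hb, hl] at this

end lemmas

open Classical in
/-- distance from `s` in the digraph `A`, valued in `ℕ∞`. -/
noncomputable def dd {V : Type*} (A : V → V → Prop) (s v : V) : ℕ∞ :=
  if h : ∃ n, NWalk A n s v then ((Nat.find h : ℕ) : ℕ∞) else ⊤

section dd
variable {V : Type*} {A : V → V → Prop} {s v : V}

lemma dd_le {n : ℕ} (h : NWalk A n s v) : dd A s v ≤ (n : ℕ∞) := by
  classical
  rw [dd, dif_pos ⟨n, h⟩]
  exact_mod_cast Nat.find_min' _ h

lemma dd_exists (h : dd A s v ≠ ⊤) : ∃ n : ℕ, dd A s v = (n : ℕ∞) ∧ NWalk A n s v := by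
  classical
  by_cases hh : ∃ n, NWalk A n s v
  · exact ⟨_, by rw [dd, dif_pos hh], Nat.find_spec hh⟩
  · exact absurd (by rw [dd, dif_neg hh]) h

end dd

/-- Let `dist_{G*}(s,t) = k`, let `E*ₖ` be the arcs on `s`-`t`-paths of length
exactly `k`, and let `G'` be obtained from `G*` by adding the reverse arcs of all
arcs of `E*ₖ`. Then every shortest `s`-`t`-path in `G'` uses only arcs of `G*`,
and consequently `dist_{G'}(s,t) = k`. -/
theorem shortest_paths_avoid_added_reverse_arcs {V : Type*} (A : V → V → Prop)
    (s t : V) (k : ℕ)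
    (hk : WalkLen A k s t) (hkmin : ∀ j < k, ¬ WalkLen A j s t)
    (A' : V → V → Prop) (hA' : ∀ a b, A' a b ↔ A a b ∨ OnPath A k s t b a) :
    (∀ (j : ℕ) (f : Fin (j + 1) → V), IsWalk A' j f → f 0 = s → f (Fin.last j) = t →
      (∀ j' < j, ¬ WalkLen A' j' s t) → ∀ i : Fin j, A (f i.castSucc) (f i.succ)) ∧
    (WalkLen A' k s t ∧ ∀ j < k, ¬ WalkLen A' j s t) := by
  classical
  have hkN : NWalk A k s t := walkLen_iff_nwalk.1 hk
  have hminN : ∀ m, NWalk A m s t → k ≤ m := by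
    intro m hm
    by_contra hc
    exact hkmin m (by omega) (walkLen_iff_nwalk.2 hm)
  -- levels determined by OnPath
  have hlev : ∀ x y : V, OnPath A k s t y x →
      ∃ l : ℕ, dd A s y ≤ (l : ℕ∞) ∧ ((l : ℕ∞) + 1) ≤ dd A s x := by
    intro x y h
    obtain ⟨l, hl, hsy, hxt⟩ := onPath_nwalk h
    refine ⟨l, dd_le hsy, ?_⟩
    by_cases hx : dd A s x = ⊤
    · rw [hx]; exact le_top
    · obtain ⟨m, hm, hwm⟩ := dd_exists hx
      have hcat : NWalk A (m + (k - (l + 1))) s t := nwalk_concat hwm hxt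
      have hge : k ≤ m + (k - (l + 1)) := hminN _ hcat
      have : l + 1 ≤ m := by omega
      rw [hm]
      exact_mod_cast this
  -- each A'-arc increases the level by at most 1
  have hstep : ∀ x y : V, A' x y → dd A s y ≤ dd A s x + 1 := by
    intro x y hxy
    rcases (hA' x y).1 hxy with h | h
    · by_cases hx : dd A s x = ⊤
      · rw [hx, top_add]; exact le_top
      · obtain ⟨m, hm, hwm⟩ := dd_exists hx
        have : NWalk A (m + 1) s y := nwalk_concat hwm (nwalk_single h)
        calc dd A s y ≤ ((m + 1 : ℕ) : ℕ∞) := dd_le this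
          _ = dd A s x + 1 := by rw [hm]; push_cast; ring
    · obtain ⟨l, h1, h2⟩ := hlev x y h
      calc dd A s y ≤ (l : ℕ∞) := h1
        _ ≤ (l : ℕ∞) + 1 := le_self_add
        _ ≤ dd A s x := h2
        _ ≤ dd A s x + 1 := le_self_add
  -- level grows by at most i along A'-walks
  have hup : ∀ (j : ℕ) (g : ℕ → V), (∀ i < j, A' (g i) (g (i + 1))) →
      ∀ i ≤ j, dd A s (g i) ≤ dd A s (g 0) + (i : ℕ∞) := by
    intro j g hg i
    induction i with
    | zero => intro _; simp
    | succ n ih =>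
      intro h
      calc dd A s (g (n + 1)) ≤ dd A s (g n) + 1 := hstep _ _ (hg n (by omega))
        _ ≤ (dd A s (g 0) + (n : ℕ∞)) + 1 := add_le_add (ih (by omega)) le_rfl
        _ = dd A s (g 0) + ((n + 1 : ℕ) : ℕ∞) := by push_cast; ring
  have hds : dd A s s = 0 := le_antisymm (by simpa using dd_le (nwalk_zero s)) zero_le
  have hdt : dd A s t = (k : ℕ∞) := by
    refine le_antisymm (dd_le hkN) ?_
    by_cases h : dd A s t = ⊤
    · rw [h]; exact le_top
    · obtain ⟨m, hm, hw⟩ := dd_exists h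
      rw [hm]
      exact_mod_cast hminN m hw
  -- any A'-walk from s to t has length at least k
  have hlb : ∀ (j : ℕ) (g : ℕ → V), (∀ i < j, A' (g i) (g (i + 1))) →
      g 0 = s → g j = t → k ≤ j := by
    intro j g hg h0 hj
    have := hup j g hg j le_rfl
    rw [hj, h0, hds, hdt, zero_add] at this
    exact_mod_cast this
  have hAsub : ∀ a b, A a b → A' a b := fun a b h => (hA' a b).2 (Or.inl h)
  have hkA' : WalkLen A' k s t := walkLen_iff_nwalk.2 (nwalk_mono hAsub hkN)
  have hminA' : ∀ j < k, ¬ WalkLen A' j s t := by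
    intro j hj hw
    obtain ⟨g, hg, h0, hl⟩ := walkLen_iff_nwalk.1 hw
    have := hlb j g hg h0 hl
    omega
  refine ⟨?_, hkA', hminA'⟩
  intro j f hf h0 hl hmin i
  -- convert the Fin-walk to a ℕ-walk
  set g : ℕ → V := fun p => f ⟨min p j, by omega⟩ with hgdef
  have hgf : ∀ (p : ℕ) (hp : p ≤ j), g p = f ⟨p, by omega⟩ := by
    intro p hp
    show f ⟨min p j, by omega⟩ = f ⟨p, by omega⟩
    rw [fin_mk_eq (a := min p j) (b := p) (by omega) (by omega) (by omega)]
  have hga : ∀ p < j, A' (g p) (g (p + 1)) := by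
    intro p hp
    rw [hgf p (by omega), hgf (p + 1) (by omega)]
    exact hf ⟨p, hp⟩
  have hg0 : g 0 = s := by
    rw [hgf 0 (by omega)]
    rw [fin_mk_eq (a := 0) (b := (0 : Fin (j + 1)).val) (by omega) (by omega) (by simp)]
    simpa using h0
  have hgj : g j = t := by
    rw [hgf j (by omega)]
    rw [fin_mk_eq (a := j) (b := (Fin.last j).val) (by omega) (by omega) (by simp)]
    exact hl
  have hjk : j = k := by
    have h1 : k ≤ j := hlb j g hga hg0 hgj
    have h2 : ¬ (k < j) := fun h => hmin k h hkA'
    omega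
  -- each vertex on the walk has level exactly its index
  have hdi : ∀ p ≤ j, dd A s (g p) = (p : ℕ∞) := by
    intro p hp
    have hub : dd A s (g p) ≤ (p : ℕ∞) := by
      have := hup j g hga p hp
      rwa [hg0, hds, zero_add] at this
    have hsuf : ∀ q < j - p, A' ((fun q => g (p + q)) q) ((fun q => g (p + q)) (q + 1)) := by
      intro q hq
      show A' (g (p + q)) (g (p + (q + 1)))
      have e : p + (q + 1) = (p + q) + 1 := by omega
      rw [e]
      exact hga (p + q) (by omega)
    have hlow := hup (j - p) (fun q => g (p + q)) hsuf (j - p) le_rfl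
    simp only [Nat.add_zero] at hlow
    rw [show p + (j - p) = j from by omega, hgj, hdt] at hlow
    obtain ⟨m, hm, _⟩ := dd_exists (fun h => by
      rw [h] at hub; exact (WithTop.natCast_ne_top p) (top_le_iff.mp hub))
    rw [hm] at hub hlow ⊢
    have hmp : m ≤ p := by exact_mod_cast hub
    have hkm : (k : ℕ∞) ≤ ((m + (j - p) : ℕ) : ℕ∞) := by push_cast; exact_mod_cast hlow
    have hkm' : k ≤ m + (j - p) := by exact_mod_cast hkm
    have : m = p := by omega
    rw [this]
  -- conclude: the i-th arc must be an original arc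
  have e1 : f i.castSucc = g i.val := (hgf i.val (by omega)).symm.trans (by congr 1)
  have e2 : f i.succ = g (i.val + 1) := (hgf (i.val + 1) (by omega)).symm.trans (by congr 1)
  rw [e1, e2]
  rcases (hA' _ _).1 (hga i.val i.isLt) with h | h
  · exact h
  · exfalso
    obtain ⟨l, hly, hlx⟩ := hlev (g i.val) (g (i.val + 1)) h
    rw [hdi (i.val + 1) (by omega)] at hly
    rw [hdi i.val (by omega)] at hlx
    have c1 : i.val + 1 ≤ l := by exact_mod_cast hly
    have c2 : l + 1 ≤ i.val := by
      have : ((l + 1 : ℕ) : ℕ∞) ≤ (i.val : ℕ∞) := by push_cast; exact_mod_cast hlx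
      exact_mod_cast this
    omega
end

section
/- Let G* be the residual network of a feasible flow and suppose dist_{G*}(s,t) ≥ k. If a new flow x' is obtained by augmenting along a flow y whose support is contained in arcs lying on s-t-paths of length exactly k in G*, then in the new residual network G̃* the distance from s to t is still at least k, and every arc of G̃* lying on an s-t-path of length exactly k already lay on such a path in G*. -/
open Finset

noncomputable def resCap {N : ℕ} (ν x : Fin N → Fin N → ℝ) (u v : Fin N) : ℝ :=
  if u < v then ν u v - x u v else if v < u then ν u v + x v u else 0

def IsFeasibleFlow {N : ℕ} (s t : Fin N) (ν x : Fin N → Fin N → ℝ) : Prop :=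
  (∀ u v : Fin N, u < v → -ν v u ≤ x u v ∧ x u v ≤ ν u v) ∧
  (∀ w : Fin N, w ≠ s → w ≠ t →
    ∑ u ∈ univ.filter (· < w), x u w = ∑ v ∈ univ.filter (w < ·), x w v)

section Walks
variable {V : Type*} {A : V → V → Prop}

lemma walkLen_iff {n : ℕ} {u v : V} :
    WalkLen A n u v ↔ ∃ F : ℕ → V, (∀ j < n, A (F j) (F (j + 1))) ∧ F 0 = u ∧ F n = v := by
  constructor
  · rintro ⟨f, hf, hf0, hfl⟩
    refine ⟨fun j => if h : j ≤ n then f ⟨j, by omega⟩ else f (Fin.last n), ?_, ?_, ?_⟩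
    · intro j hj
      beta_reduce
      rw [dif_pos (by omega : j ≤ n), dif_pos (by omega : j + 1 ≤ n)]
      have := hf ⟨j, hj⟩
      rwa [Fin.castSucc_mk, Fin.succ_mk] at this
    · beta_reduce
      rw [dif_pos (Nat.zero_le n), ← hf0]
      exact congrArg f (Fin.ext (by simp))
    · beta_reduce
      rw [dif_pos le_rfl, ← hfl]
      exact congrArg f (Fin.ext (by simp))
  · rintro ⟨F, hF, h0, hl⟩
    refine ⟨fun i => F i.val, fun i => hF i.val i.isLt, ?_, ?_⟩
    · show F (0 : Fin (n + 1)).val = u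
      rw [Fin.val_zero]; exact h0
    · show F (Fin.last n).val = v
      rw [Fin.val_last]; exact hl

lemma onPath_iff {k : ℕ} {s t a b : V} :
    OnPath A k s t a b ↔ ∃ F : ℕ → V, (∀ j < k, A (F j) (F (j + 1))) ∧ F 0 = s ∧ F k = t ∧
      ∃ i < k, F i = a ∧ F (i + 1) = b := by
  constructor
  · rintro ⟨f, hf, hf0, hfl, i, hia, hib⟩
    refine ⟨fun j => if h : j ≤ k then f ⟨j, by omega⟩ else f (Fin.last k),
      ?_, ?_, ?_, i.val, i.isLt, ?_, ?_⟩
    · intro j hj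
      beta_reduce
      rw [dif_pos (by omega : j ≤ k), dif_pos (by omega : j + 1 ≤ k)]
      have := hf ⟨j, hj⟩
      rwa [Fin.castSucc_mk, Fin.succ_mk] at this
    · beta_reduce
      rw [dif_pos (Nat.zero_le k), ← hf0]
      exact congrArg f (Fin.ext (by simp))
    · beta_reduce
      rw [dif_pos le_rfl, ← hfl]
      exact congrArg f (Fin.ext (by simp))
    · beta_reduce
      rw [dif_pos (by omega : i.val ≤ k), ← hia]
      exact congrArg f (Fin.ext (by simp))
    · beta_reduce
      rw [dif_pos (by omega : i.val + 1 ≤ k), ← hib]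
      exact congrArg f (Fin.ext (by simp))
  · rintro ⟨F, hF, h0, hl, i, hik, hia, hib⟩
    refine ⟨fun j => F j.val, fun j => hF j.val j.isLt, ?_, ?_, ⟨i, hik⟩, ?_, ?_⟩
    · show F (0 : Fin (k + 1)).val = s
      rw [Fin.val_zero]; exact h0
    · show F (Fin.last k).val = t
      rw [Fin.val_last]; exact hl
    · show F ((⟨i, hik⟩ : Fin k).castSucc).val = a
      rw [Fin.castSucc_mk]; exact hia
    · show F ((⟨i, hik⟩ : Fin k).succ).val = b
      rw [Fin.succ_mk]; exact hib

lemma walkLen_refl (u : V) : WalkLen A 0 u u :=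
  walkLen_iff.mpr ⟨fun _ => u, fun j hj => by omega, rfl, rfl⟩

lemma walkLen_single {u v : V} (h : A u v) : WalkLen A 1 u v := by
  refine walkLen_iff.mpr ⟨fun j => if j = 0 then u else v, fun j hj => ?_, by simp, by simp⟩
  have : j = 0 := by omega
  simp [this, h]

lemma walkLen_trans {m n : ℕ} {u v w : V}
    (h1 : WalkLen A m u v) (h2 : WalkLen A n v w) : WalkLen A (m + n) u w := by
  obtain ⟨F, hF, hF0, hFl⟩ := walkLen_iff.mp h1
  obtain ⟨G, hG, hG0, hGl⟩ := walkLen_iff.mp h2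
  refine walkLen_iff.mpr ⟨fun j => if j ≤ m then F j else G (j - m), fun j hj => ?_, ?_, ?_⟩
  · beta_reduce
    by_cases h1 : j + 1 ≤ m
    · rw [if_pos (by omega : j ≤ m), if_pos h1]
      exact hF j (by omega)
    · by_cases h2 : j ≤ m
      · have hjm : j = m := by omega
        rw [if_pos h2, if_neg (by omega : ¬ (j + 1 ≤ m))]
        have e : j + 1 - m = 1 := by omega
        rw [e, hjm, hFl, ← hG0]
        simpa using hG 0 (by omega)
      · rw [if_neg h2, if_neg (by omega : ¬ (j + 1 ≤ m))]
        have e : j + 1 - m = (j - m) + 1 := by omega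
        rw [e]
        exact hG (j - m) (by omega)
  · beta_reduce
    rw [if_pos (Nat.zero_le m)]
    exact hF0
  · beta_reduce
    by_cases hn : n = 0
    · rw [if_pos (by omega : m + n ≤ m), show m + n = m by omega, hFl, ← hG0, ← hGl]
      congr 1
      omega
    · rw [if_neg (by omega : ¬ (m + n ≤ m)), show m + n - m = n by omega]
      exact hGl

end Walks

lemma resCap_dich {N : ℕ} (ν x y : Fin N → Fin N → ℝ) (hy : ∀ u v, 0 ≤ y u v) (u v : Fin N)
    (h : 0 < resCap ν (fun a b => x a b + y a b - y b a) u v) :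
    0 < resCap ν x u v ∨ 0 < y v u := by
  by_contra hc
  push_neg at hc
  obtain ⟨h1, h2⟩ := hc
  have hyvu : y v u = 0 := le_antisymm h2 (hy v u)
  have hyuv : 0 ≤ y u v := hy u v
  rcases lt_trichotomy u v with h' | h' | h'
  · rw [resCap, if_pos h'] at h h1
    linarith
  · rw [resCap, if_neg (by simp [h']), if_neg (by simp [h'])] at h
    linarith
  · rw [resCap, if_neg (not_lt.mpr h'.le), if_pos h'] at h h1
    linarith

/-- Claim 11 of the paper (distance monotonicity under shortest-path augmentation):
if the residual distance from `s` to `t` is at least `k` and the flow is augmented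
along a flow `y` supported on arcs of `s`-`t`-paths of length exactly `k` in the
residual network, then in the new residual network the distance from `s` to `t` is
still at least `k`, and every arc on an `s`-`t`-path of length exactly `k` in the
new residual network already lay on such a path before. -/
theorem augment_along_shortest_paths (N k : ℕ) (s t : Fin N)
    (ν : Fin N → Fin N → ℝ) (hν : ∀ u v, 0 ≤ ν u v)
    (x : Fin N → Fin N → ℝ) (hx : IsFeasibleFlow s t ν x)
    (hdist : ∀ j < k, ¬ WalkLen (fun u v => 0 < resCap ν x u v) j s t)
    (y : Fin N → Fin N → ℝ)
    (hycap : ∀ u v : Fin N, 0 ≤ y u v ∧ y u v ≤ resCap ν x u v)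
    (hycons : ∀ w : Fin N, w ≠ s → w ≠ t → ∑ u, y u w = ∑ v, y w v)
    (hsupp : ∀ u v : Fin N, 0 < y u v →
      OnPath (fun a b => 0 < resCap ν x a b) k s t u v) :
    let x' : Fin N → Fin N → ℝ := fun u v => x u v + y u v - y v u
    let A' : Fin N → Fin N → Prop := fun u v => 0 < resCap ν x' u v
    (∀ j < k, ¬ WalkLen A' j s t) ∧
    (∀ a b : Fin N, OnPath A' k s t a b →
      OnPath (fun u v => 0 < resCap ν x u v) k s t a b) := by
  intro x' A'
  set A0 : Fin N → Fin N → Prop := fun u v => 0 < resCap ν x u v with hA0def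
  -- dichotomy for new residual arcs
  have dich : ∀ u v : Fin N, A' u v → A0 u v ∨ 0 < y v u := by
    intro u v h
    exact resCap_dich ν x y (fun a b => (hycap a b).1) u v h
  -- lower bound on distances to vertices of old shortest paths
  have lb : ∀ (G : ℕ → Fin N), (∀ j < k, A0 (G j) (G (j + 1))) → G 0 = s → G k = t →
      ∀ p ≤ k, ∀ m, WalkLen A0 m s (G p) → p ≤ m := by
    intro G hG h0 hk p hp m hm
    by_contra hcon
    push_neg at hcon
    have hsuf : WalkLen A0 (k - p) (G p) t := by
      refine walkLen_iff.mpr ⟨fun j => G (p + j), fun j hj => ?_, rfl, ?_⟩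
      · have := hG (p + j) (by omega)
        rwa [Nat.add_assoc] at this
      · show G (p + (k - p)) = t
        rw [show p + (k - p) = k by omega, hk]
    have := walkLen_trans hm hsuf
    exact hdist (m + (k - p)) (by omega) this
  -- key induction
  have key : ∀ (n : ℕ) (F : ℕ → Fin N), (∀ j < n, A' (F j) (F (j + 1))) → F 0 = s →
      ∀ j, j ≤ n → (∃ m ≤ j, WalkLen A0 m s (F j)) ∧
        ((∃ p, p < j ∧ ¬ A0 (F p) (F (p + 1))) →
          ∃ m, m + 1 ≤ j ∧ WalkLen A0 m s (F j)) := by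
    intro n F hF h0 j
    induction j with
    | zero =>
      intro _
      refine ⟨⟨0, le_rfl, by rw [h0]; exact walkLen_refl s⟩, ?_⟩
      rintro ⟨p, hp, -⟩
      omega
    | succ j ih =>
      intro hj
      obtain ⟨⟨m, hm, hwm⟩, hbad⟩ := ih (by omega)
      have harc : A' (F j) (F (j + 1)) := hF j (by omega)
      by_cases hold : A0 (F j) (F (j + 1))
      · constructor
        · exact ⟨m + 1, by omega, walkLen_trans hwm (walkLen_single hold)⟩
        · rintro ⟨p, hp, hnp⟩
          have hpj : p < j := by
            rcases Nat.lt_succ_iff_lt_or_eq.mp hp with h | h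
            · exact h
            · exact absurd (h ▸ hold) hnp
          obtain ⟨m', hm', hw'⟩ := hbad ⟨p, hpj, hnp⟩
          exact ⟨m' + 1, by omega, walkLen_trans hw' (walkLen_single hold)⟩
      · have hy : 0 < y (F (j + 1)) (F j) := (dich _ _ harc).resolve_left hold
        obtain ⟨G, hG, hG0, hGl, i, hik, hia, hib⟩ := onPath_iff.mp (hsupp _ _ hy)
        have pre : WalkLen A0 i s (F (j + 1)) :=
          walkLen_iff.mpr ⟨G, fun p hp => hG p (by omega), hG0, hia⟩
        have hlow : i + 1 ≤ m := by
          apply lb G hG hG0 hGl (i + 1) (by omega)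
          rw [hib]; exact hwm
        exact ⟨⟨i, by omega, pre⟩, fun _ => ⟨i, by omega, pre⟩⟩
  constructor
  · intro j hjk hwalk
    obtain ⟨F, hF, h0, hl⟩ := walkLen_iff.mp hwalk
    obtain ⟨⟨m, hm, hw⟩, -⟩ := key j F hF h0 j le_rfl
    exact hdist m (by omega) (hl ▸ hw)
  · intro a b hab
    obtain ⟨F, hF, h0, hl, i, hik, hia, hib⟩ := onPath_iff.mp hab
    by_cases hall : ∀ p < k, A0 (F p) (F (p + 1))
    · exact onPath_iff.mpr ⟨F, hall, h0, hl, i, hik, hia, hib⟩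
    · push_neg at hall
      obtain ⟨p, hp, hnp⟩ := hall
      obtain ⟨-, h2⟩ := key k F hF h0 k le_rfl
      obtain ⟨m, hm, hw⟩ := h2 ⟨p, hp, hnp⟩
      exact absurd (hl ▸ hw) (hdist m (by omega))
end

section
/- In a directed graph G* where dist_{G*}(s,t) ≥ k, let E*_k denote the set of arcs on s-t-paths of length exactly k. If a flow y supported on E*_k saturates at least one arc of E*_k and augmentation by y yields residual network G̃* with arc set Ẽ*_k of arcs on s-t-paths of length exactly k, then Ẽ*_k ⊊ E*_k whenever E*_k is nonempty; in particular |Ẽ*_k| < |E*_k|. -/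
open Finset

section Aux
variable {V : Type*} {A : V → V → Prop}

lemma walk_segment {k : ℕ} {f : Fin (k+1) → V} (hf : IsWalk A k f) (i j : ℕ)
    (hij : i ≤ j) (hj : j ≤ k) :
    WalkLen A (j - i) (f ⟨i, by omega⟩) (f ⟨j, by omega⟩) := by
  refine ⟨fun m => f ⟨i + m.val, by have := m.2; omega⟩, ?_, ?_, ?_⟩
  · intro m
    have hm : i + m.val < k := by have := m.2; omega
    have h := hf ⟨i + m.val, hm⟩
    convert h using 2 <;> simp [Fin.ext_iff] <;> omega
  · exact congrArg f (Fin.ext (by simp))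
  · exact congrArg f (Fin.ext (by simp [Fin.last]; omega))

lemma walkLen_comp {m n : ℕ} {a b c : V} :
    WalkLen A m a b → WalkLen A n b c → WalkLen A (m + n) a c := by
  rintro ⟨f, hf, hf0, hfl⟩ ⟨g, hg, hg0, hgl⟩
  have hfm : f ⟨m, Nat.lt_succ_self m⟩ = b := hfl
  have hg0' : g ⟨0, Nat.succ_pos n⟩ = b := hg0
  refine ⟨fun i => if h : i.val ≤ m then f ⟨i.val, by omega⟩
      else g ⟨i.val - m, by have := i.2; omega⟩, ?_, ?_, ?_⟩
  · intro i
    have hi := i.2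
    show A (if h : (i.castSucc).val ≤ m then f ⟨(i.castSucc).val, by omega⟩
        else g ⟨(i.castSucc).val - m, by have := i.castSucc.2; omega⟩)
      (if h : (i.succ).val ≤ m then f ⟨(i.succ).val, by omega⟩
        else g ⟨(i.succ).val - m, by have := i.succ.2; omega⟩)
    rcases lt_trichotomy i.val m with h | h | h
    · rw [dif_pos (by simp; omega), dif_pos (by simp [Fin.val_succ]; omega)]
      have := hf ⟨i.val, by omega⟩
      convert this using 2 <;> simp [Fin.ext_iff]
    · have hn : 0 < n := by omega
      rw [dif_pos (by simp; omega), dif_neg (by simp [Fin.val_succ]; omega)]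
      have e1 : f ⟨(i.castSucc).val, by have : (i.castSucc).val = i.val := rfl; omega⟩ = b := by
        rw [← hfm]; exact congrArg f (Fin.ext (by simp [h]))
      have e2 : (⟨(i.succ).val - m, by have := i.succ.2; omega⟩ : Fin (n+1)) = ⟨1, by omega⟩ :=
        Fin.ext (by simp [Fin.val_succ]; omega)
      rw [e1, e2, ← hg0']
      have h3 := hg ⟨0, hn⟩
      convert h3 using 2 <;> exact Fin.ext (by simp)
    · rw [dif_neg (by simp; omega), dif_neg (by simp [Fin.val_succ]; omega)]
      have := hg ⟨i.val - m, by omega⟩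
      convert this using 2 <;> simp [Fin.ext_iff, Fin.val_succ] <;> omega
  · show (if h : (0 : Fin (m+n+1)).val ≤ m then _ else _) = a
    rw [dif_pos (by simp)]
    rw [← hf0]; exact congrArg f (Fin.ext (by simp))
  · show (if h : (Fin.last (m+n)).val ≤ m then _ else _) = c
    by_cases hn : n = 0
    · subst hn
      rw [dif_pos (by simp [Fin.last])]
      have e1 : f ⟨(Fin.last (m+0)).val, by omega⟩ = b := by
        rw [← hfm]; exact congrArg f (Fin.ext (by simp [Fin.last]))
      rw [e1, ← hg0, ← hgl]
      exact congrArg g (Fin.ext (by simp))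
    · rw [dif_neg (by simp [Fin.last]; omega)]
      rw [← hgl]; exact congrArg g (Fin.ext (by simp [Fin.last]))

end Aux

noncomputable def levl {V : Type*} (A : V → V → Prop) (s v : V) : ℕ :=
  sInf {j | WalkLen A j s v}

section Lev
variable {V : Type*} {A : V → V → Prop} {k : ℕ} {s t : V}

lemma levl_le {j : ℕ} {v : V} (h : WalkLen A j s v) : levl A s v ≤ j :=
  Nat.sInf_le h

lemma levl_walk {v : V} (h : ∃ j, WalkLen A j s v) : WalkLen A (levl A s v) s v :=
  Nat.sInf_mem h

lemma levels_on_walk (hdist : ∀ j < k, ¬ WalkLen A j s t)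
    {f : Fin (k+1) → V} (hf : IsWalk A k f) (h0 : f 0 = s) (hl : f (Fin.last k) = t)
    (i : ℕ) (hi : i ≤ k) :
    (∃ j, WalkLen A j s (f ⟨i, by omega⟩)) ∧ levl A s (f ⟨i, by omega⟩) = i := by
  have h1 : WalkLen A i s (f ⟨i, by omega⟩) := by
    have h := walk_segment hf 0 i (Nat.zero_le _) hi
    rw [Nat.sub_zero] at h
    rwa [show (f ⟨0, by omega⟩) = s by rw [← h0]; exact congrArg f (Fin.ext (by simp))] at h
  refine ⟨⟨i, h1⟩, ?_⟩
  have hle := levl_le h1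
  by_contra hne
  have hlt : levl A s (f ⟨i, by omega⟩) < i := lt_of_le_of_ne hle hne
  have h2 : WalkLen A (k - i) (f ⟨i, by omega⟩) t := by
    have h := walk_segment hf i k hi le_rfl
    rwa [show (f ⟨k, by omega⟩) = t by rw [← hl]; exact congrArg f (Fin.ext (by simp [Fin.last]))] at h
  exact hdist _ (by omega) (walkLen_comp (levl_walk ⟨i, h1⟩) h2)

lemma onPath_levl {a b : V} (hdist : ∀ j < k, ¬ WalkLen A j s t)
    (h : OnPath A k s t a b) :
    (∃ j, WalkLen A j s a) ∧ (∃ j, WalkLen A j s b) ∧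
      levl A s a < k ∧ levl A s b = levl A s a + 1 := by
  obtain ⟨f, hf, h0, hl, i, ha, hb⟩ := h
  have hik := i.2
  have H1 := levels_on_walk hdist hf h0 hl i.val (le_of_lt i.2)
  have H2 := levels_on_walk hdist hf h0 hl (i.val + 1) i.2
  rw [show (⟨i.val, by omega⟩ : Fin (k+1)) = i.castSucc from Fin.ext (by simp), ha] at H1
  rw [show (⟨i.val + 1, by omega⟩ : Fin (k+1)) = i.succ from Fin.ext (by simp), hb] at H2
  exact ⟨H1.1, H2.1, by omega, by omega⟩

lemma onPath_arc {a b : V} (h : OnPath A k s t a b) : A a b := by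
  obtain ⟨f, hf, h0, hl, i, ha, hb⟩ := h
  rw [← ha, ← hb]; exact hf i

end Lev

/-- Strict decrease of the set `E*ₖ` of arcs on shortest (`length k`) `s`-`t`-paths:
if the residual distance from `s` to `t` is at least `k`, and the flow is augmented
along a flow `y` supported on `E*ₖ` that (net) saturates at least one arc of `E*ₖ`,
then the corresponding arc set `Ẽ*ₖ` of the new residual network is a strict subset
of `E*ₖ`; in particular its cardinality strictly decreases. -/
theorem shortest_path_arcs_strictly_decrease (N k : ℕ) (s t : Fin N)
    (ν : Fin N → Fin N → ℝ) (hν : ∀ u v, 0 ≤ ν u v)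
    (x : Fin N → Fin N → ℝ) (hx : IsFeasibleFlow s t ν x)
    (hdist : ∀ j < k, ¬ WalkLen (fun u v => 0 < resCap ν x u v) j s t)
    (y : Fin N → Fin N → ℝ)
    (hycap : ∀ u v : Fin N, 0 ≤ y u v ∧ y u v ≤ resCap ν x u v)
    (hycons : ∀ w : Fin N, w ≠ s → w ≠ t → ∑ u, y u w = ∑ v, y w v)
    (hsupp : ∀ u v : Fin N, 0 < y u v →
      OnPath (fun a b => 0 < resCap ν x a b) k s t u v)
    (hsat : ∃ a b : Fin N, OnPath (fun u v => 0 < resCap ν x u v) k s t a b ∧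
      y a b - y b a = resCap ν x a b)
    (hne : ∃ a b : Fin N, OnPath (fun u v => 0 < resCap ν x u v) k s t a b) :
    let x' : Fin N → Fin N → ℝ := fun u v => x u v + y u v - y v u
    let A' : Fin N → Fin N → Prop := fun u v => 0 < resCap ν x' u v
    {p : Fin N × Fin N | OnPath A' k s t p.1 p.2} ⊂
      {p : Fin N × Fin N | OnPath (fun u v => 0 < resCap ν x u v) k s t p.1 p.2} ∧
    Set.ncard {p : Fin N × Fin N | OnPath A' k s t p.1 p.2} <
      Set.ncard {p : Fin N × Fin N |
        OnPath (fun u v => 0 < resCap ν x u v) k s t p.1 p.2} := by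
  intro x' A'
  set A : Fin N → Fin N → Prop := fun u v => 0 < resCap ν x u v with hAdef
  -- basic residual facts
  have hres0 : ∀ u v, 0 ≤ resCap ν x u v := fun u v => le_trans (hycap u v).1 (hycap u v).2
  have hres' : ∀ u v, resCap ν x' u v = resCap ν x u v - y u v + y v u := by
    intro u v
    have hx' : resCap ν x' u v = if u < v then ν u v - (x u v + y u v - y v u)
        else if v < u then ν u v + (x v u + y v u - y u v) else 0 := rfl
    rw [hx']
    unfold resCap
    rcases lt_trichotomy u v with h | h | h
    · rw [if_pos h, if_pos h]; ring
    · subst h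
      rw [if_neg (lt_irrefl u), if_neg (lt_irrefl u), if_neg (lt_irrefl u),
        if_neg (lt_irrefl u)]
      ring
    · rw [if_neg (not_lt.2 h.le), if_neg (not_lt.2 h.le), if_pos h, if_pos h]; ring
  have hA'sub : ∀ u v, A' u v → A u v ∨ 0 < y v u := by
    intro u v h
    by_cases hA : A u v
    · exact Or.inl hA
    · right
      have hAn : ¬ (0 < resCap ν x u v) := hA
      have hr : resCap ν x u v = 0 := le_antisymm (not_lt.1 hAn) (hres0 u v)
      have hy2 := (hycap u v).2
      have hy1 := (hycap u v).1
      have h' : 0 < resCap ν x' u v := h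
      rw [hres'] at h'
      linarith
  -- step lemma along the new residual arcs
  have hstep : ∀ u v, A' u v → (∃ j, WalkLen A j s u) →
      (∃ j, WalkLen A j s v) ∧ levl A s v ≤ levl A s u + 1 ∧
      (¬ A u v → levl A s v + 1 = levl A s u) := by
    intro u v h hu
    rcases hA'sub u v h with hA | hy
    · have hw : WalkLen A (levl A s u + 1) s v :=
        walkLen_comp (levl_walk hu) (walkLen_single hA)
      exact ⟨⟨_, hw⟩, levl_le hw, fun hc => absurd hA hc⟩
    · have hp := hsupp v u hy
      obtain ⟨hv, hu', _, he⟩ := onPath_levl hdist hp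
      exact ⟨hv, by omega, fun _ => by omega⟩
  -- the distance from s to t is exactly k
  have hls : levl A s s = 0 := Nat.le_zero.1 (levl_le (walkLen_refl s))
  have hlt : levl A s t = k := by
    obtain ⟨a, b, hp⟩ := hne
    obtain ⟨f, hf, h0, hl, -⟩ := hp
    have hw : WalkLen A k s t := ⟨f, hf, h0, hl⟩
    rcases lt_or_eq_of_le (levl_le hw) with h | h
    · exact absurd (levl_walk ⟨k, hw⟩) (hdist _ h)
    · exact h
  -- any s-t walk of length k in the new residual network is a walk in the old one
  have hmain : ∀ g : Fin (k+1) → Fin N, IsWalk A' k g → g 0 = s → g (Fin.last k) = t →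
      IsWalk A k g := by
    intro g hg h0 hl
    obtain ⟨gn, hgn⟩ : ∃ gn : ℕ → Fin N, ∀ (i : ℕ) (h : i ≤ k), gn i = g ⟨i, by omega⟩ :=
      ⟨fun i => g ⟨min i k, by omega⟩, fun i h => congrArg g (Fin.ext (by simp; omega))⟩
    have harcn : ∀ i : ℕ, i < k → A' (gn i) (gn (i+1)) := by
      intro i hik
      rw [hgn i (by omega), hgn (i+1) (by omega)]
      have h := hg ⟨i, hik⟩
      convert h using 2 <;> exact Fin.ext (by simp)
    have hup : ∀ i : ℕ, i ≤ k → (∃ j, WalkLen A j s (gn i)) ∧ levl A s (gn i) ≤ i := by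
      intro i
      induction i with
      | zero =>
        intro _
        have e0 : gn 0 = s := by
          rw [hgn 0 (by omega), ← h0]
          exact congrArg g (Fin.ext (by simp))
        rw [e0]
        exact ⟨⟨0, walkLen_refl s⟩, hls.le⟩
      | succ i ih =>
        intro hik
        obtain ⟨hu, hlev⟩ := ih (by omega)
        obtain ⟨hv, hle, -⟩ := hstep _ _ (harcn i (by omega)) hu
        exact ⟨hv, by omega⟩
    have hdown : ∀ d i : ℕ, i + d = k → i ≤ levl A s (gn i) := by
      intro d
      induction d with
      | zero =>
        intro i he
        have hik : i = k := by omega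
        have ek : gn k = t := by
          rw [hgn k le_rfl, ← hl]
          exact congrArg g (Fin.ext (by simp [Fin.last]))
        rw [hik, ek, hlt]
      | succ d ih =>
        intro i he
        have h1 := ih (i+1) (by omega)
        obtain ⟨-, hle, -⟩ := hstep _ _ (harcn i (by omega)) (hup i (by omega)).1
        omega
    have hex : ∀ i : ℕ, i ≤ k → levl A s (gn i) = i :=
      fun i h => le_antisymm (hup i h).2 (hdown (k - i) i (by omega))
    intro i
    have hi2 := i.2
    have ha' := harcn i.val hi2
    by_cases hc : A (gn i.val) (gn (i.val + 1))
    · have e1 : gn i.val = g i.castSucc := by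
        rw [hgn i.val (by omega)]
        exact congrArg g (Fin.ext (by simp))
      have e2 : gn (i.val + 1) = g i.succ := by
        rw [hgn (i.val + 1) (by omega)]
        exact congrArg g (Fin.ext (by simp))
      rwa [e1, e2] at hc
    · exfalso
      obtain ⟨-, -, h3⟩ := hstep _ _ ha' (hup i.val (by omega)).1
      have h4 := h3 hc
      rw [hex i.val (by omega), hex (i.val + 1) (by omega)] at h4
      omega
  -- inclusion of the arc sets
  have hsub : {p : Fin N × Fin N | OnPath A' k s t p.1 p.2} ⊆
      {p : Fin N × Fin N | OnPath A k s t p.1 p.2} := by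
    rintro ⟨a, b⟩ ⟨g, hg, h0, hl, i, ha, hb⟩
    exact ⟨g, hmain g hg h0 hl, h0, hl, i, ha, hb⟩
  obtain ⟨a, b, hab, heq⟩ := hsat
  have hmemE : (a, b) ∈ {p : Fin N × Fin N | OnPath A k s t p.1 p.2} := hab
  have hnotmem : (a, b) ∉ {p : Fin N × Fin N | OnPath A' k s t p.1 p.2} := by
    intro hmem
    have harc : A' a b := onPath_arc hmem
    have h0 : 0 < resCap ν x' a b := harc
    rw [hres'] at h0
    linarith
  have hss : {p : Fin N × Fin N | OnPath A' k s t p.1 p.2} ⊂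
      {p : Fin N × Fin N | OnPath A k s t p.1 p.2} :=
    (Set.ssubset_iff_of_subset hsub).2 ⟨(a, b), hmemE, hnotmem⟩
  exact ⟨hss, Set.ncard_lt_ncard hss (Set.toFinite _)⟩
end

section
/- Let P be a directed v*-t-path in G* of length i* on which every arc has residual capacity at least c_min, and suppose the pushing procedure routes flow so that z(e) ≥ c_min for every arc e of P before the clean-up, and the clean-up only reduces flow on arcs whose head is at distance more than i* from t. Then after the clean-up, z(e) ≥ c_min for all e ∈ P; in particular an arc e ∈ P with c(e) = c_min is saturated. -/
/-- Claim 10 of the paper: let `P` (given by `f`) be a directed `v*`-`t`-path of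
length `i*` in the residual network `G* = {e : 0 < c e}` whose arcs all have
residual capacity at least `c_min > 0`, suppose the pushing procedure produced
flow values `z` with `z e ≥ c_min` on all arcs of `P`, and suppose the clean-up
only reduces flow on arcs whose head is at distance more than `i*` from `t`,
yielding `z' ≤ z` with `z' ≤ c`. Then after the clean-up `z' e ≥ c_min` on all
arcs of `P`; in particular any arc `e ∈ P` with `c e = c_min` is saturated. -/
theorem cleanup_preserves_path_flow {V : Type*} (c : V → V → ℝ) (t vstar : V)
    (cmin : ℝ) (hcmin : 0 < cmin)
    (istar : ℕ) (f : Fin (istar + 1) → V) (hinj : Function.Injective f)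
    (hf0 : f 0 = vstar) (hflast : f (Fin.last istar) = t)
    (hcap : ∀ e : Fin istar, cmin ≤ c (f e.castSucc) (f e.succ))
    (z z' : V → V → ℝ)
    (hz : ∀ e : Fin istar, cmin ≤ z (f e.castSucc) (f e.succ))
    (hreduce : ∀ u v : V, z' u v ≤ z u v)
    (hz'c : ∀ u v : V, z' u v ≤ c u v)
    (hfar : ∀ u v : V, z' u v < z u v →
      ∀ j : ℕ, j ≤ istar → ¬ WalkLen (fun a b => 0 < c a b) j v t) :
    (∀ e : Fin istar, cmin ≤ z' (f e.castSucc) (f e.succ)) ∧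
    (∀ e : Fin istar, c (f e.castSucc) (f e.succ) = cmin →
      z' (f e.castSucc) (f e.succ) = c (f e.castSucc) (f e.succ)) := by
  have key : ∀ e : Fin istar, cmin ≤ z' (f e.castSucc) (f e.succ) := by
    intro e
    have hwalk : WalkLen (fun a b => 0 < c a b) (istar - (e.val + 1)) (f e.succ) t := by
      refine ⟨fun i => f ⟨e.val + 1 + i.val, by omega⟩, ?_, ?_, ?_⟩
      · intro i
        have hi := i.isLt
        have := hcap ⟨e.val + 1 + i.val, by omega⟩
        have : 0 < c (f (Fin.castSucc ⟨e.val + 1 + i.val, by omega⟩))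
            (f (Fin.succ ⟨e.val + 1 + i.val, by omega⟩)) := lt_of_lt_of_le hcmin this
        convert this using 3 <;> simp [Fin.castSucc, Fin.succ, Fin.ext_iff] <;> omega
      · simp [Fin.succ, Fin.ext_iff]
      · have he := e.isLt
        rw [← hflast]
        apply congrArg
        rw [Fin.ext_iff]
        simp [Fin.last]
    by_contra h
    push_neg at h
    have hlt : z' (f e.castSucc) (f e.succ) < z (f e.castSucc) (f e.succ) :=
      lt_of_lt_of_le h (hz e)
    exact hfar _ _ hlt _ (by omega) hwalk
  refine ⟨key, fun e he => le_antisymm (hz'c _ _) (he ▸ key e)⟩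
end
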